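/- arXiv:1108.5009 — 5 statements merged into one kernel-verified Lean document; each statement's English description precedes it below -/
import Mathlib

section
/- Let G be a graph with an edge uv where deg(u)=2 and deg(v) ≤ M−1 for some integer M ≥ 5 with Δ(G) ≤ M. If G−uv admits an (M+1)-total coloring, then G admits an (M+1)-total coloring. -/
open SimpleGraph

/-- Two chords of a circle (vertices placed at positions `p`) cross iff their
endpoints interleave along the circle. -/
def CrossChords {V : Type*} (p : V → ℝ) (e f : Sym2 V) : Prop :=
  ∃ a b c d : V, ((e = s(a, c) ∧ f = s(b, d)) ∨ (e = s(b, d) ∧ f = s(a, c))) ∧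
    p a < p b ∧ p b < p c ∧ p c < p d

/-- A pseudo-outerplanar drawing: vertices on a circle (encoded by an injective
position function), edges as chords inside the disk, each edge crossed by at most
one other edge. -/
def HasPOPDrawing {V : Type*} (G : SimpleGraph V) : Prop :=
  ∃ p : V → ℝ, Function.Injective p ∧
    ∀ e ∈ G.edgeSet, {f | f ∈ G.edgeSet ∧ f ≠ e ∧ CrossChords p e f}.Subsingleton

/-- A block of `G`: a maximal connected set of vertices whose induced subgraph
has no cutvertex. -/
def IsBlock {V : Type*} (G : SimpleGraph V) (B : Set V) : Prop :=
  B.Nonempty ∧ (G.induce B).Connected ∧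
    (∀ v ∈ B, (G.induce (B \ {v})).Preconnected) ∧
    ∀ B' : Set V, B ⊆ B' → (G.induce B').Connected →
      (∀ v ∈ B', (G.induce (B' \ {v})).Preconnected) → B' = B

/-- A graph is pseudo-outerplanar if each of its blocks has a pseudo-outerplanar
drawing. -/
def PseudoOuterplanar {V : Type*} (G : SimpleGraph V) : Prop :=
  ∀ B : Set V, IsBlock G B → HasPOPDrawing (G.induce B)

/-- A (proper) total coloring with `k` colors: adjacent vertices differ,
incident edges differ, and every vertex differs from its incident edges. -/
def IsTotalColoring {V : Type*} (G : SimpleGraph V) (k : ℕ)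
    (cv : V → Fin k) (ce : Sym2 V → Fin k) : Prop :=
  (∀ ⦃u v⦄, G.Adj u v → cv u ≠ cv v) ∧
  (∀ e f, e ∈ G.edgeSet → f ∈ G.edgeSet → e ≠ f → (∃ w, w ∈ e ∧ w ∈ f) → ce e ≠ ce f) ∧
  (∀ v e, e ∈ G.edgeSet → v ∈ e → cv v ≠ ce e)

/-- `G` admits a `k`-total coloring. -/
def HasTotalColoring {V : Type*} (G : SimpleGraph V) (k : ℕ) : Prop :=
  ∃ cv ce, IsTotalColoring G k cv ce

/-- The total chromatic number. -/
noncomputable def totalChromaticNumber {V : Type*} (G : SimpleGraph V) : ℕ :=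
  sInf {k | HasTotalColoring G k}

theorem stmt_2 {V : Type*} [Fintype V] (G : SimpleGraph V) [DecidableRel G.Adj]
    (u v : V) (M : ℕ) (hM : 5 ≤ M) (hDelta : G.maxDegree ≤ M)
    (huv : G.Adj u v) (hdu : G.degree u = 2) (hdv : G.degree v ≤ M - 1)
    (h : HasTotalColoring (G.deleteEdges {s(u, v)}) (M + 1)) :
    HasTotalColoring G (M + 1) := by
  classical
  obtain ⟨cv, ce, hcv, hce, hve⟩ := h
  have hvu : v ≠ u := (huv.ne).symm
  have hE' : (G.deleteEdges {s(u, v)}).edgeSet = G.edgeSet \ {s(u, v)} :=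
    SimpleGraph.edgeSet_deleteEdges _
  have hmemE' : ∀ e : Sym2 V, e ∈ G.edgeSet → e ≠ s(u, v) →
      e ∈ (G.deleteEdges {s(u, v)}).edgeSet := by
    intro e he hne
    rw [hE']
    exact ⟨he, by simpa using hne⟩
  have huvE : s(u, v) ∈ G.edgeSet := G.mem_edgeSet.2 huv
  have huvI_u : s(u, v) ∈ G.incidenceFinset u := by
    rw [SimpleGraph.mem_incidenceFinset]
    exact ⟨huvE, by simp⟩
  have huvI_v : s(u, v) ∈ G.incidenceFinset v := by
    rw [SimpleGraph.mem_incidenceFinset]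
    exact ⟨huvE, by simp⟩
  -- Forbidden colors for the new edge s(u,v)
  set A : Finset (Sym2 V) :=
    (G.incidenceFinset u ∪ G.incidenceFinset v).erase s(u, v) with hA
  set F : Finset (Fin (M + 1)) := insert (cv v) (A.image ce) with hF
  have hcardUnion : (G.incidenceFinset u ∪ G.incidenceFinset v).card ≤ M := by
    have h1 := Finset.card_union_add_card_inter (G.incidenceFinset u)
      (G.incidenceFinset v)
    have h2 : 1 ≤ (G.incidenceFinset u ∩ G.incidenceFinset v).card :=
      Finset.card_pos.2 ⟨s(u, v), Finset.mem_inter.2 ⟨huvI_u, huvI_v⟩⟩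
    have h3 : (G.incidenceFinset u).card = 2 := by
      rw [SimpleGraph.card_incidenceFinset_eq_degree]; exact hdu
    have h4 : (G.incidenceFinset v).card ≤ M - 1 := by
      rw [SimpleGraph.card_incidenceFinset_eq_degree]; exact hdv
    omega
  have hFcard : F.card ≤ M := by
    have h1 : A.card ≤ M - 1 := by
      rw [hA, Finset.card_erase_of_mem (Finset.mem_union.2 (Or.inl huvI_u))]
      omega
    have h2 : (A.image ce).card ≤ A.card := Finset.card_image_le
    have h3 : F.card ≤ (A.image ce).card + 1 := Finset.card_insert_le _ _
    omega
  have hex : ∀ S : Finset (Fin (M + 1)), S.card ≤ M → ∃ c, c ∉ S := by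
    intro S hS
    by_contra hc
    push_neg at hc
    have : (Finset.univ : Finset (Fin (M + 1))).card ≤ S.card :=
      Finset.card_le_card fun x _ => hc x
    simp at this
    omega
  obtain ⟨c, hcF⟩ := hex F hFcard
  set ce' : Sym2 V → Fin (M + 1) := fun e => if e = s(u, v) then c else ce e
    with hce'
  -- Forbidden colors for the new color of vertex u
  set D : Finset (Fin (M + 1)) :=
    ((G.incidenceFinset u).image ce') ∪ ((G.neighborFinset u).image cv) with hD
  have hDcard : D.card ≤ M := by
    have h3 : (G.incidenceFinset u).card = 2 := by
      rw [SimpleGraph.card_incidenceFinset_eq_degree]; exact hdu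
    have h4 : (G.neighborFinset u).card = 2 := by
      rw [SimpleGraph.card_neighborFinset_eq_degree]; exact hdu
    have h5 : D.card ≤ ((G.incidenceFinset u).image ce').card
        + ((G.neighborFinset u).image cv).card := by
      rw [hD]; exact Finset.card_union_le _ _
    have h6 : ((G.incidenceFinset u).image ce').card ≤ (G.incidenceFinset u).card :=
      Finset.card_image_le
    have h7 : ((G.neighborFinset u).image cv).card ≤ (G.neighborFinset u).card :=
      Finset.card_image_le
    omega
  obtain ⟨d, hdD⟩ := hex D hDcard
  set cv' : V → Fin (M + 1) := fun x => if x = u then d else cv x with hcv'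
  have hceF : ∀ e : Sym2 V, e ∈ G.edgeSet → e ≠ s(u, v) → (u ∈ e ∨ v ∈ e) →
      ce e ∈ F := by
    intro e he hne hmem
    apply Finset.mem_insert_of_mem
    apply Finset.mem_image_of_mem
    rw [hA, Finset.mem_erase]
    refine ⟨hne, Finset.mem_union.2 ?_⟩
    rcases hmem with h' | h'
    · exact Or.inl ((SimpleGraph.mem_incidenceFinset _ _ _).2 ⟨he, h'⟩)
    · exact Or.inr ((SimpleGraph.mem_incidenceFinset _ _ _).2 ⟨he, h'⟩)
  have hdnbr : ∀ y : V, G.Adj u y → d ≠ cv y := by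
    intro y hy heq
    apply hdD
    rw [hD]
    apply Finset.mem_union_right
    rw [heq]
    exact Finset.mem_image_of_mem cv ((SimpleGraph.mem_neighborFinset _ _ _).2 hy)
  have hdedge : ∀ e : Sym2 V, e ∈ G.edgeSet → u ∈ e → d ≠ ce' e := by
    intro e he hue heq
    apply hdD
    rw [hD]
    apply Finset.mem_union_left
    rw [heq]
    exact Finset.mem_image_of_mem ce'
      ((SimpleGraph.mem_incidenceFinset _ _ _).2 ⟨he, hue⟩)
  refine ⟨cv', ce', ?_, ?_, ?_⟩
  · -- vertices
    intro x y hxy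
    simp only [hcv']
    by_cases hx : x = u
    · by_cases hy : y = u
      · exact absurd (hx ▸ hy ▸ hxy) (G.irrefl)
      · rw [if_pos hx, if_neg hy]
        exact hdnbr y (hx ▸ hxy)
    · by_cases hy : y = u
      · rw [if_neg hx, if_pos hy]
        exact fun heq => hdnbr x (hy ▸ hxy.symm) heq.symm
      · rw [if_neg hx, if_neg hy]
        apply hcv
        rw [SimpleGraph.deleteEdges_adj]
        refine ⟨hxy, ?_⟩
        simp only [Set.mem_singleton_iff, Sym2.eq_iff]
        rintro (⟨rfl, rfl⟩ | ⟨rfl, rfl⟩)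
        · exact hx rfl
        · exact hy rfl
  · -- edges
    intro e f he hf hef hw
    simp only [hce']
    by_cases heuv : e = s(u, v)
    · by_cases hfuv : f = s(u, v)
      · exact absurd (heuv.trans hfuv.symm) hef
      · rw [if_pos heuv, if_neg hfuv]
        intro heq
        apply hcF
        apply heq ▸ hceF f hf hfuv
        obtain ⟨w, hwe, hwf⟩ := hw
        rw [heuv] at hwe
        rcases Sym2.mem_iff.1 hwe with rfl | rfl
        · exact Or.inl hwf
        · exact Or.inr hwf
    · by_cases hfuv : f = s(u, v)
      · rw [if_neg heuv, if_pos hfuv]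
        intro heq
        apply hcF
        apply heq ▸ hceF e he heuv
        obtain ⟨w, hwe, hwf⟩ := hw
        rw [hfuv] at hwf
        rcases Sym2.mem_iff.1 hwf with rfl | rfl
        · exact Or.inl hwe
        · exact Or.inr hwe
      · rw [if_neg heuv, if_neg hfuv]
        exact hce e f (hmemE' e he heuv) (hmemE' f hf hfuv) hef hw
  · -- vertex vs incident edge
    intro x e he hxe
    simp only [hcv', hce']
    by_cases heuv : e = s(u, v)
    · rw [if_pos heuv]
      by_cases hx : x = u
      · rw [if_pos hx]
        have : ce' s(u, v) = c := by simp [hce']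
        rw [← this]
        exact hdedge s(u, v) huvE (by simp)
      · have hxv : x = v := by
          rw [heuv] at hxe
          rcases Sym2.mem_iff.1 hxe with h' | h'
          · exact absurd h' hx
          · exact h'
        rw [if_neg hx, hxv]
        intro heq
        exact hcF (heq ▸ Finset.mem_insert_self _ _)
    · rw [if_neg heuv]
      by_cases hx : x = u
      · rw [if_pos hx]
        have : ce' e = ce e := by simp [hce', heuv]
        rw [← this]
        exact hdedge e he (hx ▸ hxe)
      · rw [if_neg hx]
        exact hve x e (hmemE' e he heuv) hxe
end

section
/- Let M ≥ 5 and let G be a graph with Δ(G) ≤ M containing a 4-cycle u,x,v,y with deg(u)=deg(v)=2 (u adjacent to x and y, v adjacent to x and y, and these are all neighbors of u and v). If G−{u,v} admits an (M+1)-total coloring, then G admits an (M+1)-total coloring. -/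
open SimpleGraph

lemma pick_cd {α : Type*} [DecidableEq α] (S : Finset α) (hS : 2 ≤ S.card)
    (a b : α) (hab : a ≠ b) :
    ∃ c ∈ S, ∃ d ∈ S, c ≠ d ∧ c ≠ a ∧ d ≠ b := by
  by_cases ha : a ∈ S
  · have h1 : (S.erase a).Nonempty := by
      rw [← Finset.card_pos, Finset.card_erase_of_mem ha]; omega
    obtain ⟨c, hc⟩ := h1
    exact ⟨c, (Finset.mem_erase.mp hc).2, a, ha, (Finset.mem_erase.mp hc).1,
      (Finset.mem_erase.mp hc).1, hab⟩
  · have h1 : (S \ {b}).Nonempty := by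
      rw [← Finset.card_pos]
      have := Finset.le_card_sdiff ({b} : Finset α) S
      simp at this; omega
    obtain ⟨d, hd⟩ := h1
    have hdS : d ∈ S := (Finset.mem_sdiff.mp hd).1
    have hdb : d ≠ b := by simpa using (Finset.mem_sdiff.mp hd).2
    have h2 : (S.erase d).Nonempty := by
      rw [← Finset.card_pos, Finset.card_erase_of_mem hdS]; omega
    obtain ⟨c, hc⟩ := h2
    have hcS : c ∈ S := (Finset.mem_erase.mp hc).2
    exact ⟨c, hcS, d, hdS, (Finset.mem_erase.mp hc).1, fun h => ha (h ▸ hcS), hdb⟩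

theorem stmt_3 {V : Type*} [Fintype V] (G : SimpleGraph V) [DecidableRel G.Adj]
    (u v x y : V) (M : ℕ) (hM : 5 ≤ M) (hDelta : G.maxDegree ≤ M)
    (hxy : x ≠ y) (huv : u ≠ v)
    (hu : G.neighborSet u = {x, y}) (hv : G.neighborSet v = {x, y})
    (h : HasTotalColoring (G.induce ({u, v}ᶜ : Set V)) (M + 1)) :
    HasTotalColoring G (M + 1) := by
  classical
  obtain ⟨cv0, ce0, hcv0, hce0, hve0⟩ := h
  have hmemu : ∀ w, G.Adj u w ↔ (w = x ∨ w = y) := by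
    intro w
    rw [← SimpleGraph.mem_neighborSet, hu]
    simp
  have hmemv : ∀ w, G.Adj v w ↔ (w = x ∨ w = y) := by
    intro w
    rw [← SimpleGraph.mem_neighborSet, hv]
    simp
  have hux : G.Adj u x := (hmemu x).mpr (Or.inl rfl)
  have huy : G.Adj u y := (hmemu y).mpr (Or.inr rfl)
  have hvx : G.Adj v x := (hmemv x).mpr (Or.inl rfl)
  have hvy : G.Adj v y := (hmemv y).mpr (Or.inr rfl)
  have hux' : u ≠ x := G.ne_of_adj hux
  have huy' : u ≠ y := G.ne_of_adj huy
  have hvx' : v ≠ x := G.ne_of_adj hvx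
  have hvy' : v ≠ y := G.ne_of_adj hvy
  have hnuv : ¬ G.Adj u v := by
    intro hadj
    rcases (hmemu v).mp hadj with h1 | h1
    · exact hvx' h1
    · exact hvy' h1
  have hCmem : ∀ w, w ∈ ({u,v}ᶜ : Set V) ↔ w ≠ u ∧ w ≠ v := by
    intro w; simp [not_or]
  have hxC : x ∈ ({u,v}ᶜ : Set V) := (hCmem x).mpr ⟨hux'.symm, hvx'.symm⟩
  have hyC : y ∈ ({u,v}ᶜ : Set V) := (hCmem y).mpr ⟨huy'.symm, hvy'.symm⟩
  -- retraction to the subtype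
  let r : V → ({u,v}ᶜ : Set V) := fun w =>
    if hw : w ∈ ({u,v}ᶜ : Set V) then ⟨w, hw⟩ else ⟨x, hxC⟩
  have hr : ∀ w (hw : w ∈ ({u,v}ᶜ : Set V)), r w = ⟨w, hw⟩ := fun w hw => dif_pos hw
  -- degree bounds and forbidden sets at x and y
  have hdeg : ∀ z : V, G.Adj z u → G.Adj z v → (G.neighborFinset z \ {u,v}).card ≤ M - 2 := by
    intro z hzu hzv
    have hsub : ({u, v} : Finset V) ⊆ G.neighborFinset z := by
      intro w hw
      rcases Finset.mem_insert.mp hw with rfl | hw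
      · exact (G.mem_neighborFinset z w).mpr hzu
      · rw [Finset.mem_singleton] at hw; subst hw
        exact (G.mem_neighborFinset z w).mpr hzv
    have h2 : ({u, v} : Finset V).card = 2 := by
      rw [Finset.card_insert_of_notMem (by simpa using huv), Finset.card_singleton]
    have hdz : (G.neighborFinset z).card ≤ M := le_trans (G.degree_le_maxDegree z) hDelta
    rw [Finset.card_sdiff_of_subset hsub, h2]; omega
  set Fx : Finset (Fin (M+1)) := insert (cv0 ⟨x, hxC⟩)
    ((G.neighborFinset x \ {u,v}).image (fun w => ce0 s(⟨x, hxC⟩, r w))) with hFxdef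
  set Fy : Finset (Fin (M+1)) := insert (cv0 ⟨y, hyC⟩)
    ((G.neighborFinset y \ {u,v}).image (fun w => ce0 s(⟨y, hyC⟩, r w))) with hFydef
  have hFxcard : Fx.card ≤ M - 1 := by
    have h1 := Finset.card_image_le (s := G.neighborFinset x \ {u,v})
      (f := fun w => ce0 s(⟨x, hxC⟩, r w))
    have h2 := hdeg x hux.symm hvx.symm
    calc Fx.card ≤ _ + 1 := Finset.card_insert_le _ _
      _ ≤ M - 1 := by omega
  have hFycard : Fy.card ≤ M - 1 := by
    have h1 := Finset.card_image_le (s := G.neighborFinset y \ {u,v})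
      (f := fun w => ce0 s(⟨y, hyC⟩, r w))
    have h2 := hdeg y huy.symm hvy.symm
    calc Fy.card ≤ _ + 1 := Finset.card_insert_le _ _
      _ ≤ M - 1 := by omega
  have hFxc : 2 ≤ Fxᶜ.card := by
    rw [Finset.card_compl, Fintype.card_fin]; omega
  have hFyc : 2 ≤ Fyᶜ.card := by
    rw [Finset.card_compl, Fintype.card_fin]; omega
  obtain ⟨a, haF, b, hbF, hab⟩ := Finset.one_lt_card.mp (by omega : 1 < Fxᶜ.card)
  have haFx : a ∉ Fx := Finset.mem_compl.mp haF
  have hbFx : b ∉ Fx := Finset.mem_compl.mp hbF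
  obtain ⟨c, hcF, d, hdF, hcd, hca, hdb⟩ := pick_cd Fyᶜ hFyc a b hab
  have hcFy : c ∉ Fy := Finset.mem_compl.mp hcF
  have hdFy : d ∉ Fy := Finset.mem_compl.mp hdF
  -- vertex colors for u and v
  set P : Finset (Fin (M+1)) := {a, c, cv0 ⟨x, hxC⟩, cv0 ⟨y, hyC⟩} with hPdef
  have hPcard : P.card < M + 1 := by
    have h1 := Finset.card_insert_le a ({c, cv0 ⟨x, hxC⟩, cv0 ⟨y, hyC⟩} : Finset (Fin (M+1)))
    have h2 := Finset.card_insert_le c ({cv0 ⟨x, hxC⟩, cv0 ⟨y, hyC⟩} : Finset (Fin (M+1)))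
    have h3 := Finset.card_insert_le (cv0 ⟨x, hxC⟩) ({cv0 ⟨y, hyC⟩} : Finset (Fin (M+1)))
    have h4 := Finset.card_singleton (cv0 ⟨y, hyC⟩)
    rw [hPdef]
    omega
  have hPc : Pᶜ.Nonempty := by
    rw [← Finset.card_pos, Finset.card_compl, Fintype.card_fin]; omega
  obtain ⟨pu, hpu⟩ := hPc
  have hpuP : pu ∉ P := Finset.mem_compl.mp hpu
  have hpua : pu ≠ a := by intro hh; exact hpuP (by rw [hPdef, hh]; simp)
  have hpuc : pu ≠ c := by intro hh; exact hpuP (by rw [hPdef, hh]; simp)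
  have hpux : pu ≠ cv0 ⟨x, hxC⟩ := by intro hh; exact hpuP (by rw [hPdef, hh]; simp)
  have hpuy : pu ≠ cv0 ⟨y, hyC⟩ := by intro hh; exact hpuP (by rw [hPdef, hh]; simp)
  set Q : Finset (Fin (M+1)) := {b, d, cv0 ⟨x, hxC⟩, cv0 ⟨y, hyC⟩, pu} with hQdef
  have hQcard : Q.card < M + 1 := by
    have h1 := Finset.card_insert_le b ({d, cv0 ⟨x, hxC⟩, cv0 ⟨y, hyC⟩, pu} : Finset (Fin (M+1)))
    have h2 := Finset.card_insert_le d ({cv0 ⟨x, hxC⟩, cv0 ⟨y, hyC⟩, pu} : Finset (Fin (M+1)))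
    have h3 := Finset.card_insert_le (cv0 ⟨x, hxC⟩) ({cv0 ⟨y, hyC⟩, pu} : Finset (Fin (M+1)))
    have h4 := Finset.card_insert_le (cv0 ⟨y, hyC⟩) ({pu} : Finset (Fin (M+1)))
    have h5 := Finset.card_singleton pu
    rw [hQdef]
    omega
  have hQc : Qᶜ.Nonempty := by
    rw [← Finset.card_pos, Finset.card_compl, Fintype.card_fin]; omega
  obtain ⟨pv, hpv⟩ := hQc
  have hpvQ : pv ∉ Q := Finset.mem_compl.mp hpv
  have hpvb : pv ≠ b := by intro hh; exact hpvQ (by rw [hQdef, hh]; simp)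
  have hpvd : pv ≠ d := by intro hh; exact hpvQ (by rw [hQdef, hh]; simp)
  have hpvx : pv ≠ cv0 ⟨x, hxC⟩ := by intro hh; exact hpvQ (by rw [hQdef, hh]; simp)
  have hpvy : pv ≠ cv0 ⟨y, hyC⟩ := by intro hh; exact hpvQ (by rw [hQdef, hh]; simp)
  have hpvu : pv ≠ pu := by intro hh; exact hpvQ (by rw [hQdef, hh]; simp)
  -- the new colorings
  set cv' : V → Fin (M+1) := fun w =>
    if w = u then pu else if w = v then pv else cv0 (r w) with hcv'def
  set ce' : Sym2 V → Fin (M+1) := fun e =>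
    if e = s(u,x) then a else if e = s(u,y) then c
    else if e = s(v,x) then b else if e = s(v,y) then d
    else ce0 (Sym2.map r e) with hce'def
  -- values on the special edges
  have vux : ce' s(u,x) = a := by
    simp only [hce'def]
    simp
  have vuy : ce' s(u,y) = c := by
    simp only [hce'def]
    rw [if_neg (by simp [Sym2.eq_iff, hxy, hxy.symm, huv, huv.symm, hux', huy', hvx', hvy', hux'.symm, huy'.symm, hvx'.symm, hvy'.symm])]
    simp
  have vvx : ce' s(v,x) = b := by
    simp only [hce'def]
    rw [if_neg (by simp [Sym2.eq_iff, hxy, hxy.symm, huv, huv.symm, hux', huy', hvx', hvy', hux'.symm, huy'.symm, hvx'.symm, hvy'.symm]),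
        if_neg (by simp [Sym2.eq_iff, hxy, hxy.symm, huv, huv.symm, hux', huy', hvx', hvy', hux'.symm, huy'.symm, hvx'.symm, hvy'.symm])]
    simp
  have vvy : ce' s(v,y) = d := by
    simp only [hce'def]
    rw [if_neg (by simp [Sym2.eq_iff, hxy, hxy.symm, huv, huv.symm, hux', huy', hvx', hvy', hux'.symm, huy'.symm, hvx'.symm, hvy'.symm]),
        if_neg (by simp [Sym2.eq_iff, hxy, hxy.symm, huv, huv.symm, hux', huy', hvx', hvy', hux'.symm, huy'.symm, hvx'.symm, hvy'.symm]),
        if_neg (by simp [Sym2.eq_iff, hxy, hxy.symm, huv, huv.symm, hux', huy', hvx', hvy', hux'.symm, huy'.symm, hvx'.symm, hvy'.symm])]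
    simp
  have hcvu : cv' u = pu := by simp [hcv'def]
  have hcvv : cv' v = pv := by simp [hcv'def, Ne.symm huv]
  have hcvOld : ∀ w (hw : w ∈ ({u,v}ᶜ : Set V)), cv' w = cv0 ⟨w, hw⟩ := by
    intro w hw
    obtain ⟨hw1, hw2⟩ := (hCmem w).mp hw
    simp only [hcv'def]
    rw [if_neg hw1, if_neg hw2, hr w hw]
  -- old edges keep their color
  have hceOld : ∀ (e : Sym2 V), u ∉ e → v ∉ e → ce' e = ce0 (Sym2.map r e) := by
    intro e hue hve
    simp only [hce'def]
    rw [if_neg (by rintro rfl; exact hue (by simp)), if_neg (by rintro rfl; exact hue (by simp)),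
        if_neg (by rintro rfl; exact hve (by simp)), if_neg (by rintro rfl; exact hve (by simp))]
  have hmapVal : ∀ (e : Sym2 V), u ∉ e → v ∉ e →
      Sym2.map Subtype.val (Sym2.map r e) = e := by
    intro e
    induction e with
    | _ p q =>
      intro hue hve
      simp only [Sym2.mem_iff, not_or] at hue hve
      have hp : p ∈ ({u,v}ᶜ : Set V) := (hCmem p).mpr ⟨fun h => hue.1 h.symm, fun h => hve.1 h.symm⟩
      have hq : q ∈ ({u,v}ᶜ : Set V) := (hCmem q).mpr ⟨fun h => hue.2 h.symm, fun h => hve.2 h.symm⟩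
      simp only [Sym2.map_pair_eq, hr p hp, hr q hq]
  have hmapMem : ∀ e ∈ G.edgeSet, u ∉ e → v ∉ e →
      Sym2.map r e ∈ (G.induce ({u,v}ᶜ : Set V)).edgeSet := by
    intro e
    induction e with
    | _ p q =>
      intro he hue hve
      simp only [Sym2.mem_iff, not_or] at hue hve
      have hp : p ∈ ({u,v}ᶜ : Set V) := (hCmem p).mpr ⟨fun h => hue.1 h.symm, fun h => hve.1 h.symm⟩
      have hq : q ∈ ({u,v}ᶜ : Set V) := (hCmem q).mpr ⟨fun h => hue.2 h.symm, fun h => hve.2 h.symm⟩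
      rw [Sym2.map_pair_eq, hr p hp, hr q hq, SimpleGraph.mem_edgeSet]
      simpa using (SimpleGraph.mem_edgeSet G).mp he
  have hmemr : ∀ (w : V) (e : Sym2 V), w ∈ e → r w ∈ Sym2.map r e := by
    intro w e hw
    exact Sym2.mem_map.mpr ⟨w, hw, rfl⟩
  -- classification of edges
  have hclass : ∀ e ∈ G.edgeSet, e = s(u,x) ∨ e = s(u,y) ∨ e = s(v,x) ∨ e = s(v,y) ∨
      (u ∉ e ∧ v ∉ e) := by
    intro e he
    induction e with
    | _ p q =>
      have hadj : G.Adj p q := (SimpleGraph.mem_edgeSet G).mp he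
      by_cases hpu : p = u
      · subst hpu
        rcases (hmemu q).mp hadj with rfl | rfl
        · exact Or.inl rfl
        · exact Or.inr (Or.inl rfl)
      by_cases hqu : q = u
      · subst hqu
        rcases (hmemu p).mp hadj.symm with rfl | rfl
        · exact Or.inl (Sym2.eq_swap)
        · exact Or.inr (Or.inl (Sym2.eq_swap))
      by_cases hpv : p = v
      · subst hpv
        rcases (hmemv q).mp hadj with rfl | rfl
        · exact Or.inr (Or.inr (Or.inl rfl))
        · exact Or.inr (Or.inr (Or.inr (Or.inl rfl)))
      by_cases hqv : q = v
      · subst hqv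
        rcases (hmemv p).mp hadj.symm with rfl | rfl
        · exact Or.inr (Or.inr (Or.inl Sym2.eq_swap))
        · exact Or.inr (Or.inr (Or.inr (Or.inl Sym2.eq_swap)))
      · refine Or.inr (Or.inr (Or.inr (Or.inr ⟨?_, ?_⟩)))
        · simp only [Sym2.mem_iff, not_or]
          exact ⟨fun h => hpu h.symm, fun h => hqu h.symm⟩
        · simp only [Sym2.mem_iff, not_or]
          exact ⟨fun h => hpv h.symm, fun h => hqv h.symm⟩
  -- coverage: old edges through x have colors in Fx (similarly y)
  have hcov : ∀ (z : V) (hzC : z ∈ ({u,v}ᶜ : Set V))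
      (F : Finset (Fin (M+1))),
      F = insert (cv0 ⟨z, hzC⟩)
        ((G.neighborFinset z \ {u,v}).image (fun w => ce0 s(⟨z, hzC⟩, r w))) →
      ∀ f ∈ G.edgeSet, u ∉ f → v ∉ f → z ∈ f → ce' f ∈ F := by
    intro z hzC F hF f
    induction f with
    | _ p q =>
      intro hfe huf hvf hzf
      simp only [Sym2.mem_iff, not_or] at huf hvf
      have hadj : G.Adj p q := (SimpleGraph.mem_edgeSet G).mp hfe
      have key : ∀ p q : V, G.Adj p q → p = z → q ≠ u → q ≠ v → ce' s(p,q) ∈ F := by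
        intro p q hadj hpz hqu hqv
        subst hpz
        have hqC : q ∈ ({u,v}ᶜ : Set V) := (hCmem q).mpr ⟨hqu, hqv⟩
        have hpz : (p : V) ∈ ({u,v}ᶜ : Set V) := hzC
        have hunotin : u ∉ s(p,q) := by
          simp only [Sym2.mem_iff, not_or]
          obtain ⟨h1, h2⟩ := (hCmem p).mp hzC
          exact ⟨fun h => h1 h.symm, fun h => hqu h.symm⟩
        have hvnotin : v ∉ s(p,q) := by
          simp only [Sym2.mem_iff, not_or]
          obtain ⟨h1, h2⟩ := (hCmem p).mp hzC
          exact ⟨fun h => h2 h.symm, fun h => hqv h.symm⟩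
        rw [hceOld _ hunotin hvnotin, Sym2.map_pair_eq, hr p hzC]
        rw [hF]
        refine Finset.mem_insert_of_mem (Finset.mem_image.mpr ⟨q, ?_, rfl⟩)
        rw [Finset.mem_sdiff]
        constructor
        · exact (G.mem_neighborFinset p q).mpr hadj
        · simp [hqu, hqv]
      rcases Sym2.mem_iff.mp hzf with rfl | rfl
      · exact key z q hadj rfl (fun h => huf.2 h.symm) (fun h => hvf.2 h.symm)
      · rw [Sym2.eq_swap]
        exact key z p hadj.symm rfl (fun h => huf.1 h.symm) (fun h => hvf.1 h.symm)
  have hcovx := hcov x hxC Fx hFxdef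
  have hcovy := hcov y hyC Fy hFydef
  have hcvxmem : cv0 ⟨x, hxC⟩ ∈ Fx := by rw [hFxdef]; exact Finset.mem_insert_self _ _
  have hcvymem : cv0 ⟨y, hyC⟩ ∈ Fy := by rw [hFydef]; exact Finset.mem_insert_self _ _
  -- now assemble
  refine ⟨cv', ce', ?_, ?_, ?_⟩
  · -- vertex coloring proper
    intro p q hpq
    by_cases hpu : p = u
    · subst hpu
      rcases (hmemu q).mp hpq with rfl | rfl
      · rw [hcvu, hcvOld q hxC]; exact hpux
      · rw [hcvu, hcvOld q hyC]; exact hpuy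
    by_cases hpv : p = v
    · subst hpv
      rcases (hmemv q).mp hpq with rfl | rfl
      · rw [hcvv, hcvOld q hxC]; exact hpvx
      · rw [hcvv, hcvOld q hyC]; exact hpvy
    by_cases hqu : q = u
    · subst hqu
      rcases (hmemu p).mp hpq.symm with rfl | rfl
      · rw [hcvu, hcvOld p hxC]; exact hpux.symm
      · rw [hcvu, hcvOld p hyC]; exact hpuy.symm
    by_cases hqv : q = v
    · subst hqv
      rcases (hmemv p).mp hpq.symm with rfl | rfl
      · rw [hcvv, hcvOld p hxC]; exact hpvx.symm
      · rw [hcvv, hcvOld p hyC]; exact hpvy.symm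
    · have hpC : p ∈ ({u,v}ᶜ : Set V) := (hCmem p).mpr ⟨hpu, hpv⟩
      have hqC : q ∈ ({u,v}ᶜ : Set V) := (hCmem q).mpr ⟨hqu, hqv⟩
      rw [hcvOld p hpC, hcvOld q hqC]
      exact hcv0 (by simpa using hpq : (G.induce ({u,v}ᶜ : Set V)).Adj ⟨p, hpC⟩ ⟨q, hqC⟩)
  · -- edge coloring proper
    rintro e f he hf hef ⟨w, hwe, hwf⟩
    have noShare : ∀ (p1 q1 p2 q2 : V), w ∈ s(p1,q1) → w ∈ s(p2,q2) →
        p1 ≠ p2 → p1 ≠ q2 → q1 ≠ p2 → q1 ≠ q2 → False := by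
      intro p1 q1 p2 q2 h1 h2 n1 n2 n3 n4
      rcases Sym2.mem_iff.mp h1 with rfl | rfl <;>
        rcases Sym2.mem_iff.mp h2 with h | h
      · exact n1 h
      · exact n2 h
      · exact n3 h
      · exact n4 h
    have specOldX : ∀ (f : Sym2 V), f ∈ G.edgeSet → u ∉ f → v ∉ f → x ∈ f →
        ∀ col : Fin (M+1), col ∉ Fx → col ≠ ce' f := by
      intro f hf huf hvf hxf col hcol hh
      exact hcol (hh ▸ hcovx f hf huf hvf hxf)
    have specOldY : ∀ (f : Sym2 V), f ∈ G.edgeSet → u ∉ f → v ∉ f → y ∈ f →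
        ∀ col : Fin (M+1), col ∉ Fy → col ≠ ce' f := by
      intro f hf huf hvf hyf col hcol hh
      exact hcol (hh ▸ hcovy f hf huf hvf hyf)
    rcases hclass e he with rfl | rfl | rfl | rfl | ⟨hue, hve⟩ <;>
      rcases hclass f hf with rfl | rfl | rfl | rfl | ⟨huf, hvf⟩
    -- e = s(u,x)
    · exact absurd rfl hef
    · rw [vux, vuy]; exact fun hh => hca hh.symm
    · rw [vux, vvx]; exact hab
    · exact absurd (noShare u x v y hwe hwf huv huy' hvx'.symm hxy) id
    · rcases Sym2.mem_iff.mp hwe with rfl | rfl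
      · exact absurd hwf huf
      · rw [vux]; exact specOldX f hf huf hvf hwf a haFx
    -- e = s(u,y)
    · rw [vuy, vux]; exact hca
    · exact absurd rfl hef
    · exact absurd (noShare u y v x hwe hwf huv hux' hvy'.symm hxy.symm) id
    · rw [vuy, vvy]; exact hcd
    · rcases Sym2.mem_iff.mp hwe with rfl | rfl
      · exact absurd hwf huf
      · rw [vuy]; exact specOldY f hf huf hvf hwf c hcFy
    -- e = s(v,x)
    · rw [vvx, vux]; exact hab.symm
    · exact absurd (noShare v x u y hwe hwf (Ne.symm huv) hvy' hux'.symm hxy) id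
    · exact absurd rfl hef
    · rw [vvx, vvy]; exact fun hh => hdb hh.symm
    · rcases Sym2.mem_iff.mp hwe with rfl | rfl
      · exact absurd hwf hvf
      · rw [vvx]; exact specOldX f hf huf hvf hwf b hbFx
    -- e = s(v,y)
    · exact absurd (noShare v y u x hwe hwf (Ne.symm huv) hvx' huy'.symm hxy.symm) id
    · rw [vvy, vuy]; exact hcd.symm
    · rw [vvy, vvx]; exact hdb
    · exact absurd rfl hef
    · rcases Sym2.mem_iff.mp hwe with rfl | rfl
      · exact absurd hwf hvf
      · rw [vvy]; exact specOldY f hf huf hvf hwf d hdFy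
    -- e old
    · rcases Sym2.mem_iff.mp hwf with rfl | rfl
      · exact absurd hwe hue
      · rw [vux]; exact fun hh => (specOldX e he hue hve hwe a haFx) hh.symm
    · rcases Sym2.mem_iff.mp hwf with rfl | rfl
      · exact absurd hwe hue
      · rw [vuy]; exact fun hh => (specOldY e he hue hve hwe c hcFy) hh.symm
    · rcases Sym2.mem_iff.mp hwf with rfl | rfl
      · exact absurd hwe hve
      · rw [vvx]; exact fun hh => (specOldX e he hue hve hwe b hbFx) hh.symm
    · rcases Sym2.mem_iff.mp hwf with rfl | rfl
      · exact absurd hwe hve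
      · rw [vvy]; exact fun hh => (specOldY e he hue hve hwe d hdFy) hh.symm
    · have h3 : Sym2.map r e ≠ Sym2.map r f := by
        intro hh
        exact hef (by rw [← hmapVal e hue hve, ← hmapVal f huf hvf, hh])
      rw [hceOld e hue hve, hceOld f huf hvf]
      exact hce0 _ _ (hmapMem e he hue hve) (hmapMem f hf huf hvf) h3
        ⟨r w, hmemr w e hwe, hmemr w f hwf⟩
  · -- vertex vs incident edge
    intro w e he hwe
    rcases hclass e he with rfl | rfl | rfl | rfl | ⟨hue, hve⟩
    · rw [vux]
      rcases Sym2.mem_iff.mp hwe with rfl | rfl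
      · rw [hcvu]; exact hpua
      · rw [hcvOld w hxC]; exact fun hh => haFx (hh ▸ hcvxmem)
    · rw [vuy]
      rcases Sym2.mem_iff.mp hwe with rfl | rfl
      · rw [hcvu]; exact hpuc
      · rw [hcvOld w hyC]; exact fun hh => hcFy (hh ▸ hcvymem)
    · rw [vvx]
      rcases Sym2.mem_iff.mp hwe with rfl | rfl
      · rw [hcvv]; exact hpvb
      · rw [hcvOld w hxC]; exact fun hh => hbFx (hh ▸ hcvxmem)
    · rw [vvy]
      rcases Sym2.mem_iff.mp hwe with rfl | rfl
      · rw [hcvv]; exact hpvd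
      · rw [hcvOld w hyC]; exact fun hh => hdFy (hh ▸ hcvymem)
    · have hwC : w ∈ ({u,v}ᶜ : Set V) := by
        refine (hCmem w).mpr ⟨?_, ?_⟩
        · rintro rfl; exact hue hwe
        · rintro rfl; exact hve hwe
      rw [hcvOld w hwC, hceOld e hue hve]
      have := hve0 (r w) (Sym2.map r e) (hmapMem e he hue hve) (hmemr w e hwe)
      rwa [hr w hwC] at this
end

section
/- Let M ≥ 5 and let G be a graph with Δ(G) ≤ M containing vertices u,v,x,y forming a 4-cycle u,x,v,y with the chord uv ∈ E(G), where deg(u)=deg(v)=3. If G−uv admits an (M+1)-total coloring, then G admits an (M+1)-total coloring. -/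
open SimpleGraph

section Helpers

variable {α : Type*} [DecidableEq α]

private lemma cardIns {s : Finset α} {k : ℕ} (h : s.card ≤ k) (x : α) :
    (insert x s).card ≤ k + 1 :=
  (Finset.card_insert_le _ _).trans (by omega)

private lemma card4' (a b c d : α) : ({a,b,c,d} : Finset α).card ≤ 4 := by
  have h1 : ({d} : Finset α).card ≤ 1 := by simp
  exact cardIns (cardIns (cardIns h1 c) b) a

private lemma card5' (a b c d e : α) : ({a,b,c,d,e} : Finset α).card ≤ 5 := by
  have h1 : ({e} : Finset α).card ≤ 1 := by simp
  exact cardIns (cardIns (cardIns (cardIns h1 d) c) b) a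

private lemma exists_notin {n : ℕ} (hn : 6 ≤ n) {s : Finset (Fin n)} (hs : s.card ≤ 5) :
    ∃ t, t ∉ s := by
  by_contra hc
  push_neg at hc
  have h1 : (Finset.univ : Finset (Fin n)) ⊆ s := fun t _ => hc t
  have h2 := Finset.card_le_card h1
  simp at h2
  omega

private lemma six_distinct {a b c d e f : α}
    (h : 6 ≤ ({a,b,c,d,e,f} : Finset α).card) :
    a≠b ∧ a≠c ∧ a≠d ∧ a≠e ∧ a≠f ∧ b≠c ∧ b≠d ∧ b≠e ∧ b≠f ∧ c≠d ∧ c≠e ∧ c≠f ∧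
      d≠e ∧ d≠f ∧ e≠f := by
  have h1 : ({a,b,c,d,e,f} : Finset α) = [a,b,c,d,e,f].toFinset := by simp
  rw [h1, List.card_toFinset] at h
  have h3 : [a,b,c,d,e,f].dedup = [a,b,c,d,e,f] :=
    (List.dedup_sublist _).eq_of_length (by
      have h2 := (List.dedup_sublist [a,b,c,d,e,f]).length_le
      simp at h2 ⊢
      omega)
  have h4 : [a,b,c,d,e,f].Nodup := by rw [← List.dedup_eq_self]; exact h3
  simp [List.nodup_cons] at h4
  tauto

private lemma extend_col {V : Type*} (G : SimpleGraph V) (u v : V) (huv : G.Adj u v) {k : ℕ}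
    (cv' : V → Fin k) (ce : Sym2 V → Fin k) (te : Fin k)
    (H1 : ∀ ⦃a b⦄, G.Adj a b → cv' a ≠ cv' b)
    (H2 : ∀ e f, e ∈ (G.deleteEdges {s(u,v)}).edgeSet → f ∈ (G.deleteEdges {s(u,v)}).edgeSet →
      e ≠ f → (∃ w, w ∈ e ∧ w ∈ f) → ce e ≠ ce f)
    (H3 : ∀ w e, e ∈ (G.deleteEdges {s(u,v)}).edgeSet → w ∈ e → cv' w ≠ ce e)
    (H4 : ∀ e, e ∈ (G.deleteEdges {s(u,v)}).edgeSet → (u ∈ e ∨ v ∈ e) → ce e ≠ te)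
    (H5 : cv' u ≠ te) (H6 : cv' v ≠ te) :
    HasTotalColoring G k := by
  classical
  have hmem : ∀ e, e ∈ G.edgeSet ↔ (e ∈ (G.deleteEdges {s(u,v)}).edgeSet ∨ e = s(u,v)) := by
    intro e
    rw [SimpleGraph.edgeSet_deleteEdges]
    constructor
    · intro he
      by_cases h' : e = s(u,v)
      · exact Or.inr h'
      · exact Or.inl ⟨he, by simpa using h'⟩
    · rintro (⟨he, -⟩ | rfl)
      · exact he
      · exact huv
  refine ⟨cv', fun e => if e = s(u,v) then te else ce e, H1, ?_, ?_⟩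
  · intro e f he hf hef hshare
    by_cases he' : e = s(u,v) <;> by_cases hf' : f = s(u,v)
    · exact absurd (he'.trans hf'.symm) hef
    · simp only [if_pos he', if_neg hf']
      have hfG : f ∈ (G.deleteEdges {s(u,v)}).edgeSet := by
        rcases (hmem f).1 hf with h' | h'
        · exact h'
        · exact absurd h' hf'
      obtain ⟨w, hw1, hw2⟩ := hshare
      rw [he'] at hw1
      have hor : u ∈ f ∨ v ∈ f := by
        rcases Sym2.mem_iff.1 hw1 with rfl | rfl
        · exact Or.inl hw2
        · exact Or.inr hw2
      exact (H4 f hfG hor).symm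
    · simp only [if_pos hf', if_neg he']
      have heG : e ∈ (G.deleteEdges {s(u,v)}).edgeSet := by
        rcases (hmem e).1 he with h' | h'
        · exact h'
        · exact absurd h' he'
      obtain ⟨w, hw1, hw2⟩ := hshare
      rw [hf'] at hw2
      have hor : u ∈ e ∨ v ∈ e := by
        rcases Sym2.mem_iff.1 hw2 with rfl | rfl
        · exact Or.inl hw1
        · exact Or.inr hw1
      exact H4 e heG hor
    · simp only [if_neg he', if_neg hf']
      have heG : e ∈ (G.deleteEdges {s(u,v)}).edgeSet := by
        rcases (hmem e).1 he with h' | h'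
        · exact h'
        · exact absurd h' he'
      have hfG : f ∈ (G.deleteEdges {s(u,v)}).edgeSet := by
        rcases (hmem f).1 hf with h' | h'
        · exact h'
        · exact absurd h' hf'
      exact H2 e f heG hfG hef hshare
  · intro w e he hw
    by_cases he' : e = s(u,v)
    · simp only [if_pos he']
      rw [he'] at hw
      rcases Sym2.mem_iff.1 hw with rfl | rfl
      · exact H5
      · exact H6
    · simp only [if_neg he']
      have heG : e ∈ (G.deleteEdges {s(u,v)}).edgeSet := by
        rcases (hmem e).1 he with h' | h'
        · exact h'
        · exact absurd h' he'
      exact H3 w e heG hw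

end Helpers


theorem stmt_4 {V : Type*} [Fintype V] (G : SimpleGraph V) [DecidableRel G.Adj]
    (u v x y : V) (M : ℕ) (hM : 5 ≤ M) (hDelta : G.maxDegree ≤ M)
    (hxy : x ≠ y)
    (hux : G.Adj u x) (hxv : G.Adj x v) (hvy : G.Adj v y) (hyu : G.Adj y u)
    (huv : G.Adj u v) (hdu : G.degree u = 3) (hdv : G.degree v = 3)
    (h : HasTotalColoring (G.deleteEdges {s(u, v)}) (M + 1)) :
    HasTotalColoring G (M + 1) := by
  classical
  obtain ⟨cv, ce, hvv, hee, hve⟩ := h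
  have h6le : 6 ≤ M + 1 := by omega
  have huvne : u ≠ v := huv.ne
  have huxne : u ≠ x := hux.ne
  have huyne : u ≠ y := hyu.ne'
  have hvxne : v ≠ x := hxv.ne'
  have hvyne : v ≠ y := hvy.ne
  have e1 : s(u,x) ≠ s(u,v) := by
    intro hcon; rcases Sym2.eq_iff.1 hcon with (⟨-, h'⟩ | ⟨h', -⟩)
    exacts [hvxne h'.symm, huvne h']
  have e2 : s(u,y) ≠ s(u,v) := by
    intro hcon; rcases Sym2.eq_iff.1 hcon with (⟨-, h'⟩ | ⟨h', -⟩)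
    exacts [hvyne h'.symm, huvne h']
  have e3 : s(v,x) ≠ s(u,v) := by
    intro hcon; rcases Sym2.eq_iff.1 hcon with (⟨h', -⟩ | ⟨-, h'⟩)
    exacts [huvne h'.symm, huxne h'.symm]
  have e4 : s(v,y) ≠ s(u,v) := by
    intro hcon; rcases Sym2.eq_iff.1 hcon with (⟨h', -⟩ | ⟨-, h'⟩)
    exacts [huvne h'.symm, huyne h'.symm]
  have aux_adj : ∀ p q : V, G.Adj p q → s(p,q) ≠ s(u,v) →
      (G.deleteEdges {s(u,v)}).Adj p q := by
    intro p q h1 h2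
    rw [SimpleGraph.deleteEdges_adj]
    exact ⟨h1, by simpa using h2⟩
  have adjux : (G.deleteEdges {s(u,v)}).Adj u x := aux_adj _ _ hux e1
  have adjuy : (G.deleteEdges {s(u,v)}).Adj u y := aux_adj _ _ hyu.symm e2
  have adjvx : (G.deleteEdges {s(u,v)}).Adj v x := aux_adj _ _ hxv.symm e3
  have adjvy : (G.deleteEdges {s(u,v)}).Adj v y := aux_adj _ _ hvy e4
  have eux : s(u,x) ∈ (G.deleteEdges {s(u,v)}).edgeSet := (SimpleGraph.mem_edgeSet _).2 adjux
  have euy : s(u,y) ∈ (G.deleteEdges {s(u,v)}).edgeSet := (SimpleGraph.mem_edgeSet _).2 adjuy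
  have evx : s(v,x) ∈ (G.deleteEdges {s(u,v)}).edgeSet := (SimpleGraph.mem_edgeSet _).2 adjvx
  have evy : s(v,y) ∈ (G.deleteEdges {s(u,v)}).edgeSet := (SimpleGraph.mem_edgeSet _).2 adjvy
  -- basic distinctness of colors
  have hab : ce s(u,x) ≠ ce s(u,y) := by
    refine hee _ _ eux euy ?_ ⟨u, by simp, by simp⟩
    intro hcon; rcases Sym2.eq_iff.1 hcon with (⟨-, h'⟩ | ⟨h', -⟩)
    exacts [hxy h', huyne h']
  have hac : ce s(u,x) ≠ ce s(v,x) := by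
    refine hee _ _ eux evx ?_ ⟨x, by simp, by simp⟩
    intro hcon; rcases Sym2.eq_iff.1 hcon with (⟨h', -⟩ | ⟨h', -⟩)
    exacts [huvne h', huxne h']
  have hbd : ce s(u,y) ≠ ce s(v,y) := by
    refine hee _ _ euy evy ?_ ⟨y, by simp, by simp⟩
    intro hcon; rcases Sym2.eq_iff.1 hcon with (⟨h', -⟩ | ⟨h', -⟩)
    exacts [huvne h', huyne h']
  have hcd : ce s(v,x) ≠ ce s(v,y) := by
    refine hee _ _ evx evy ?_ ⟨v, by simp, by simp⟩
    intro hcon; rcases Sym2.eq_iff.1 hcon with (⟨-, h'⟩ | ⟨h', -⟩)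
    exacts [hxy h', hvyne h']
  have hpa : cv u ≠ ce s(u,x) := hve u _ eux (by simp)
  have hpb : cv u ≠ ce s(u,y) := hve u _ euy (by simp)
  have hqc : cv v ≠ ce s(v,x) := hve v _ evx (by simp)
  have hqd : cv v ≠ ce s(v,y) := hve v _ evy (by simp)
  have hxa : cv x ≠ ce s(u,x) := hve x _ eux (by simp)
  have hxc : cv x ≠ ce s(v,x) := hve x _ evx (by simp)
  have hyb : cv y ≠ ce s(u,y) := hve y _ euy (by simp)
  have hyd : cv y ≠ ce s(v,y) := hve y _ evy (by simp)
  have hpx : cv u ≠ cv x := hvv adjux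
  have hpy : cv u ≠ cv y := hvv adjuy
  have hqx : cv v ≠ cv x := hvv adjvx
  have hqy : cv v ≠ cv y := hvv adjvy
  -- neighborhood structure
  have hNu : ∀ w, G.Adj u w → w = x ∨ w = y ∨ w = v := by
    intro w hw
    have hsub : ({x, y, v} : Finset V) ⊆ G.neighborFinset u := by
      intro z hz
      simp only [Finset.mem_insert, Finset.mem_singleton] at hz
      rcases hz with rfl | rfl | rfl
      · exact (SimpleGraph.mem_neighborFinset _ _ _).2 hux
      · exact (SimpleGraph.mem_neighborFinset _ _ _).2 hyu.symm
      · exact (SimpleGraph.mem_neighborFinset _ _ _).2 huv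
    have hcard : ({x, y, v} : Finset V).card = 3 := by
      rw [Finset.card_insert_of_notMem (by simp [hxy, hvxne.symm]),
        Finset.card_insert_of_notMem (by simp [hvyne.symm]), Finset.card_singleton]
    have heq : G.neighborFinset u = {x, y, v} :=
      (Finset.eq_of_subset_of_card_le hsub
        (by rw [SimpleGraph.card_neighborFinset_eq_degree, hdu, hcard])).symm
    have hmem := (SimpleGraph.mem_neighborFinset _ _ _).2 hw
    rw [heq] at hmem
    simpa using hmem
  have hNv : ∀ w, G.Adj v w → w = x ∨ w = y ∨ w = u := by
    intro w hw
    have hsub : ({x, y, u} : Finset V) ⊆ G.neighborFinset v := by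
      intro z hz
      simp only [Finset.mem_insert, Finset.mem_singleton] at hz
      rcases hz with rfl | rfl | rfl
      · exact (SimpleGraph.mem_neighborFinset _ _ _).2 hxv.symm
      · exact (SimpleGraph.mem_neighborFinset _ _ _).2 hvy
      · exact (SimpleGraph.mem_neighborFinset _ _ _).2 huv.symm
    have hcard : ({x, y, u} : Finset V).card = 3 := by
      rw [Finset.card_insert_of_notMem (by simp [hxy, huxne.symm]),
        Finset.card_insert_of_notMem (by simp [huyne.symm]), Finset.card_singleton]
    have heq : G.neighborFinset v = {x, y, u} :=
      (Finset.eq_of_subset_of_card_le hsub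
        (by rw [SimpleGraph.card_neighborFinset_eq_degree, hdv, hcard])).symm
    have hmem := (SimpleGraph.mem_neighborFinset _ _ _).2 hw
    rw [heq] at hmem
    simpa using hmem
  have hNu' : ∀ w, (G.deleteEdges {s(u,v)}).Adj u w → w = x ∨ w = y := by
    intro w hw
    rw [SimpleGraph.deleteEdges_adj] at hw
    rcases hNu w hw.1 with rfl | rfl | rfl
    · exact Or.inl rfl
    · exact Or.inr rfl
    · exact absurd rfl hw.2
  have hNv' : ∀ w, (G.deleteEdges {s(u,v)}).Adj v w → w = x ∨ w = y := by
    intro w hw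
    rw [SimpleGraph.deleteEdges_adj] at hw
    rcases hNv w hw.1 with rfl | rfl | rfl
    · exact Or.inl rfl
    · exact Or.inr rfl
    · exact absurd (Set.mem_singleton_iff.2 (Sym2.eq_iff.2 (Or.inr ⟨rfl, rfl⟩))) hw.2
  have hEu : ∀ e, e ∈ (G.deleteEdges {s(u,v)}).edgeSet → u ∈ e →
      e = s(u,x) ∨ e = s(u,y) := by
    intro e he hu'
    obtain ⟨z, rfl⟩ := Sym2.mem_iff_exists.1 hu'
    rcases hNu' z ((SimpleGraph.mem_edgeSet _).1 he) with rfl | rfl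
    · exact Or.inl rfl
    · exact Or.inr rfl
  have hEv : ∀ e, e ∈ (G.deleteEdges {s(u,v)}).edgeSet → v ∈ e →
      e = s(v,x) ∨ e = s(v,y) := by
    intro e he hv'
    obtain ⟨z, rfl⟩ := Sym2.mem_iff_exists.1 hv'
    rcases hNv' z ((SimpleGraph.mem_edgeSet _).1 he) with rfl | rfl
    · exact Or.inl rfl
    · exact Or.inr rfl
  have adjchar : ∀ a b : V, G.Adj a b →
      (G.deleteEdges {s(u,v)}).Adj a b ∨ (a = u ∧ b = v) ∨ (a = v ∧ b = u) := by
    intro a b hab'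
    by_cases hs : s(a,b) = s(u,v)
    · rcases Sym2.eq_iff.1 hs with ⟨rfl, rfl⟩ | ⟨rfl, rfl⟩
      · exact Or.inr (Or.inl ⟨rfl, rfl⟩)
      · exact Or.inr (Or.inr ⟨rfl, rfl⟩)
    · left
      rw [SimpleGraph.deleteEdges_adj]
      exact ⟨hab', by simpa using hs⟩
  -- the two recoloring procedures
  have recolorU : ∀ t te : Fin (M+1),
      t ≠ cv x → t ≠ cv y → t ≠ cv v → t ≠ ce s(u,x) → t ≠ ce s(u,y) → t ≠ te →
      te ≠ ce s(u,x) → te ≠ ce s(u,y) → te ≠ ce s(v,x) → te ≠ ce s(v,y) → te ≠ cv v →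
      HasTotalColoring G (M+1) := by
    intro t te h1 h2 h3 h4 h5 h6 h7 h8 h9 h10 h11
    apply extend_col G u v huv (Function.update cv u t) ce te
    · intro a' b' hadj
      rcases adjchar a' b' hadj with hG' | ⟨rfl, rfl⟩ | ⟨rfl, rfl⟩
      · by_cases ha : a' = u <;> by_cases hb : b' = u
        · exact absurd (ha.trans hb.symm) hadj.ne
        · subst ha
          rw [Function.update_self, Function.update_of_ne hb]
          rcases hNu' b' hG' with rfl | rfl
          · exact h1
          · exact h2
        · subst hb
          rw [Function.update_self, Function.update_of_ne ha]
          rcases hNu' a' hG'.symm with rfl | rfl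
          · exact h1.symm
          · exact h2.symm
        · rw [Function.update_of_ne ha, Function.update_of_ne hb]
          exact hvv hG'
      · rw [Function.update_self, Function.update_of_ne huvne.symm]
        exact h3
      · rw [Function.update_of_ne huvne.symm, Function.update_self]
        exact h3.symm
    · exact hee
    · intro w e he hw
      by_cases hwu : w = u
      · subst hwu
        rw [Function.update_self]
        rcases hEu e he hw with rfl | rfl
        · exact h4
        · exact h5
      · rw [Function.update_of_ne hwu]
        exact hve w e he hw
    · intro e he hor
      rcases hor with hu' | hv'
      · rcases hEu e he hu' with rfl | rfl
        · exact h7.symm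
        · exact h8.symm
      · rcases hEv e he hv' with rfl | rfl
        · exact h9.symm
        · exact h10.symm
    · rw [Function.update_self]; exact h6
    · rw [Function.update_of_ne huvne.symm]; exact h11.symm
  have recolorV : ∀ t te : Fin (M+1),
      t ≠ cv x → t ≠ cv y → t ≠ cv u → t ≠ ce s(v,x) → t ≠ ce s(v,y) → t ≠ te →
      te ≠ ce s(u,x) → te ≠ ce s(u,y) → te ≠ ce s(v,x) → te ≠ ce s(v,y) → te ≠ cv u →
      HasTotalColoring G (M+1) := by
    intro t te h1 h2 h3 h4 h5 h6 h7 h8 h9 h10 h11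
    apply extend_col G u v huv (Function.update cv v t) ce te
    · intro a' b' hadj
      rcases adjchar a' b' hadj with hG' | ⟨rfl, rfl⟩ | ⟨rfl, rfl⟩
      · by_cases ha : a' = v <;> by_cases hb : b' = v
        · exact absurd (ha.trans hb.symm) hadj.ne
        · subst ha
          rw [Function.update_self, Function.update_of_ne hb]
          rcases hNv' b' hG' with rfl | rfl
          · exact h1
          · exact h2
        · subst hb
          rw [Function.update_self, Function.update_of_ne ha]
          rcases hNv' a' hG'.symm with rfl | rfl
          · exact h1.symm
          · exact h2.symm
        · rw [Function.update_of_ne ha, Function.update_of_ne hb]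
          exact hvv hG'
      · rw [Function.update_of_ne huvne, Function.update_self]
        exact h3.symm
      · rw [Function.update_self, Function.update_of_ne huvne]
        exact h3
    · exact hee
    · intro w e he hw
      by_cases hwv : w = v
      · subst hwv
        rw [Function.update_self]
        rcases hEv e he hw with rfl | rfl
        · exact h4
        · exact h5
      · rw [Function.update_of_ne hwv]
        exact hve w e he hw
    · intro e he hor
      rcases hor with hu' | hv'
      · rcases hEu e he hu' with rfl | rfl
        · exact h7.symm
        · exact h8.symm
      · rcases hEv e he hv' with rfl | rfl
        · exact h9.symm
        · exact h10.symm
    · rw [Function.update_of_ne huvne]; exact h11.symm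
    · rw [Function.update_self]; exact h6
  -- main case analysis
  by_cases hpq : cv u = cv v
  · -- cv u = cv v : we must recolor u or v
    by_cases hBu : ∃ t te : Fin (M+1),
        t ∉ ({cv x, cv y, cv v, ce s(u,x), ce s(u,y), te} : Finset (Fin (M+1))) ∧
        te ∉ ({ce s(u,x), ce s(u,y), ce s(v,x), ce s(v,y), cv v, t} : Finset (Fin (M+1)))
    · obtain ⟨t, te, ht, hte⟩ := hBu
      simp only [Finset.mem_insert, Finset.mem_singleton, not_or] at ht hte
      exact recolorU t te ht.1 ht.2.1 ht.2.2.1 ht.2.2.2.1 ht.2.2.2.2.1 ht.2.2.2.2.2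
        hte.1 hte.2.1 hte.2.2.1 hte.2.2.2.1 hte.2.2.2.2.1
    · by_cases hBv : ∃ t te : Fin (M+1),
          t ∉ ({cv x, cv y, cv u, ce s(v,x), ce s(v,y), te} : Finset (Fin (M+1))) ∧
          te ∉ ({ce s(u,x), ce s(u,y), ce s(v,x), ce s(v,y), cv u, t} : Finset (Fin (M+1)))
      · obtain ⟨t, te, ht, hte⟩ := hBv
        simp only [Finset.mem_insert, Finset.mem_singleton, not_or] at ht hte
        exact recolorV t te ht.1 ht.2.1 ht.2.2.1 ht.2.2.2.1 ht.2.2.2.2.1 ht.2.2.2.2.2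
          hte.1 hte.2.1 hte.2.2.1 hte.2.2.2.1 hte.2.2.2.2.1
      · exfalso
        push_neg at hBu hBv
        obtain ⟨t0, ht0⟩ := exists_notin h6le
          (card5' (cv x) (cv y) (cv v) (ce s(u,x)) (ce s(u,y)))
        obtain ⟨te0, hte0⟩ := exists_notin h6le
          (card5' (ce s(u,x)) (ce s(u,y)) (ce s(v,x)) (ce s(v,y)) (cv v))
        simp only [Finset.mem_insert, Finset.mem_singleton, not_or] at ht0 hte0
        have hst : t0 = te0 := by
          by_contra hne
          have h1 : t0 ∉ ({cv x, cv y, cv v, ce s(u,x), ce s(u,y), te0} :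
              Finset (Fin (M+1))) := by
            simp only [Finset.mem_insert, Finset.mem_singleton, not_or]
            exact ⟨ht0.1, ht0.2.1, ht0.2.2.1, ht0.2.2.2.1, ht0.2.2.2.2, hne⟩
          have h2 := hBu t0 te0 h1
          simp only [Finset.mem_insert, Finset.mem_singleton] at h2
          rcases h2 with h'|h'|h'|h'|h'|h'
          exacts [hte0.1 h', hte0.2.1 h', hte0.2.2.1 h', hte0.2.2.2.1 h',
            hte0.2.2.2.2 h', hne h'.symm]
        have key1 : ∀ z : Fin (M+1), z ≠ t0 →
            z = cv x ∨ z = cv y ∨ z = cv v ∨ z = ce s(u,x) ∨ z = ce s(u,y) := by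
          intro z hz
          by_contra hcon
          push_neg at hcon
          obtain ⟨k1, k2, k3, k4, k5⟩ := hcon
          have h1 : z ∉ ({cv x, cv y, cv v, ce s(u,x), ce s(u,y), te0} :
              Finset (Fin (M+1))) := by
            simp only [Finset.mem_insert, Finset.mem_singleton, not_or]
            exact ⟨k1, k2, k3, k4, k5, hst ▸ hz⟩
          have h2 := hBu z te0 h1
          simp only [Finset.mem_insert, Finset.mem_singleton] at h2
          rcases h2 with h'|h'|h'|h'|h'|h'
          exacts [hte0.1 h', hte0.2.1 h', hte0.2.2.1 h', hte0.2.2.2.1 h',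
            hte0.2.2.2.2 h', hz (h'.symm.trans hst.symm)]
        have key2 : ∀ z : Fin (M+1), z ≠ t0 →
            z = ce s(u,x) ∨ z = ce s(u,y) ∨ z = ce s(v,x) ∨ z = ce s(v,y) ∨ z = cv v := by
          intro z hz
          have h1 : t0 ∉ ({cv x, cv y, cv v, ce s(u,x), ce s(u,y), z} :
              Finset (Fin (M+1))) := by
            simp only [Finset.mem_insert, Finset.mem_singleton, not_or]
            exact ⟨ht0.1, ht0.2.1, ht0.2.2.1, ht0.2.2.2.1, ht0.2.2.2.2, hz.symm⟩
          have h2 := hBu t0 z h1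
          simp only [Finset.mem_insert, Finset.mem_singleton] at h2
          rcases h2 with h'|h'|h'|h'|h'|h'
          exacts [Or.inl h', Or.inr (Or.inl h'), Or.inr (Or.inr (Or.inl h')),
            Or.inr (Or.inr (Or.inr (Or.inl h'))), Or.inr (Or.inr (Or.inr (Or.inr h'))),
            absurd h' hz]
        have key3 : ∀ z : Fin (M+1), z ≠ t0 →
            z = cv x ∨ z = cv y ∨ z = cv u ∨ z = ce s(v,x) ∨ z = ce s(v,y) := by
          intro z hz
          by_contra hcon
          push_neg at hcon
          obtain ⟨k1, k2, k3, k4, k5⟩ := hcon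
          have h1 : z ∉ ({cv x, cv y, cv u, ce s(v,x), ce s(v,y), te0} :
              Finset (Fin (M+1))) := by
            simp only [Finset.mem_insert, Finset.mem_singleton, not_or]
            exact ⟨k1, k2, k3, k4, k5, hst ▸ hz⟩
          have h2 := hBv z te0 h1
          simp only [Finset.mem_insert, Finset.mem_singleton] at h2
          rcases h2 with h'|h'|h'|h'|h'|h'
          exacts [hte0.1 h', hte0.2.1 h', hte0.2.2.1 h', hte0.2.2.2.1 h',
            hte0.2.2.2.2 (h'.trans hpq), hz (h'.symm.trans hst.symm)]
        have hU2 : ∀ z : Fin (M+1),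
            z ∈ ({t0, cv x, cv y, cv u, ce s(v,x), ce s(v,y)} : Finset (Fin (M+1))) := by
          intro z
          by_cases hz : z = t0
          · simp [hz]
          · simp only [Finset.mem_insert, Finset.mem_singleton]
            rcases key3 z hz with h'|h'|h'|h'|h'
            exacts [Or.inr (Or.inl h'), Or.inr (Or.inr (Or.inl h')),
              Or.inr (Or.inr (Or.inr (Or.inl h'))),
              Or.inr (Or.inr (Or.inr (Or.inr (Or.inl h')))),
              Or.inr (Or.inr (Or.inr (Or.inr (Or.inr h'))))]
        have hc2 : 6 ≤ ({t0, cv x, cv y, cv u, ce s(v,x), ce s(v,y)} :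
            Finset (Fin (M+1))).card := by
          have hsub : (Finset.univ : Finset (Fin (M+1))) ⊆ _ := fun z _ => hU2 z
          have hcc := Finset.card_le_card hsub
          simp at hcc
          omega
        obtain ⟨-, -, -, -, -, -, -, -, -, -, hcyc, -, -, -, -⟩ := six_distinct hc2
        have hU3 : ∀ z : Fin (M+1),
            z ∈ ({t0, ce s(u,x), ce s(u,y), ce s(v,x), ce s(v,y), cv v} :
              Finset (Fin (M+1))) := by
          intro z
          by_cases hz : z = t0
          · simp [hz]
          · simp only [Finset.mem_insert, Finset.mem_singleton]
            rcases key2 z hz with h'|h'|h'|h'|h'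
            exacts [Or.inr (Or.inl h'), Or.inr (Or.inr (Or.inl h')),
              Or.inr (Or.inr (Or.inr (Or.inl h'))),
              Or.inr (Or.inr (Or.inr (Or.inr (Or.inl h')))),
              Or.inr (Or.inr (Or.inr (Or.inr (Or.inr h'))))]
        have hc3 : 6 ≤ ({t0, ce s(u,x), ce s(u,y), ce s(v,x), ce s(v,y), cv v} :
            Finset (Fin (M+1))).card := by
          have hsub : (Finset.univ : Finset (Fin (M+1))) ⊆ _ := fun z _ => hU3 z
          have hcc := Finset.card_le_card hsub
          simp at hcc
          omega
        obtain ⟨-, -, -, -, -, -, -, -, -, hbc, -, -, -, -, -⟩ := six_distinct hc3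
        have hc_ne_t0 : ce s(v,x) ≠ t0 := fun h' => hte0.2.2.1 ((h'.trans hst).symm)
        rcases key1 _ hc_ne_t0 with h'|h'|h'|h'|h'
        · exact hxc h'.symm
        · exact hcyc h'.symm
        · exact hqc h'.symm
        · exact hac h'.symm
        · exact hbc h'.symm
  · -- cv u ≠ cv v
    by_cases hA1 : ∃ t : Fin (M+1),
        t ∉ ({ce s(u,x), ce s(u,y), ce s(v,x), ce s(v,y), cv u, cv v} :
          Finset (Fin (M+1)))
    · obtain ⟨t, ht⟩ := hA1
      simp only [Finset.mem_insert, Finset.mem_singleton, not_or] at ht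
      exact recolorU (cv u) t hpx hpy hpq hpa hpb (Ne.symm ht.2.2.2.2.1)
        ht.1 ht.2.1 ht.2.2.1 ht.2.2.2.1 ht.2.2.2.2.2
    · push_neg at hA1
      have hc1 : 6 ≤ ({ce s(u,x), ce s(u,y), ce s(v,x), ce s(v,y), cv u, cv v} :
          Finset (Fin (M+1))).card := by
        have hsub : (Finset.univ : Finset (Fin (M+1))) ⊆ _ := fun z _ => hA1 z
        have hcc := Finset.card_le_card hsub
        simp at hcc
        omega
      obtain ⟨Hab, Hac, Had, Hap, Haq, Hbc, Hbd, Hbp, Hbq, Hcd, Hcp, Hcq, Hdp, Hdq, Hpq⟩ :=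
        six_distinct hc1
      by_cases hA2 : ∃ t : Fin (M+1),
          t ∉ ({cv x, cv y, cv v, ce s(u,x), ce s(u,y), cv u} : Finset (Fin (M+1)))
      · obtain ⟨t, ht⟩ := hA2
        simp only [Finset.mem_insert, Finset.mem_singleton, not_or] at ht
        exact recolorU t (cv u) ht.1 ht.2.1 ht.2.2.1 ht.2.2.2.1 ht.2.2.2.2.1
          ht.2.2.2.2.2 hpa hpb Hcp.symm Hdp.symm hpq
      · push_neg at hA2
        have hcx' : ce s(v,x) = cv x ∨ ce s(v,x) = cv y := by
          have hh := hA2 (ce s(v,x))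
          simp only [Finset.mem_insert, Finset.mem_singleton] at hh
          rcases hh with h'|h'|h'|h'|h'|h'
          exacts [Or.inl h', Or.inr h', absurd h'.symm hqc, absurd h'.symm Hac,
            absurd h'.symm Hbc, absurd h' Hcp]
        have hdx' : ce s(v,y) = cv x ∨ ce s(v,y) = cv y := by
          have hh := hA2 (ce s(v,y))
          simp only [Finset.mem_insert, Finset.mem_singleton] at hh
          rcases hh with h'|h'|h'|h'|h'|h'
          exacts [Or.inl h', Or.inr h', absurd h'.symm hqd, absurd h'.symm Had,
            absurd h'.symm Hbd, absurd h' Hdp]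
        have hcvx : cv x = ce s(v,x) ∨ cv x = ce s(v,y) := by
          rcases hcx' with h'|h'
          · exact Or.inl h'.symm
          · rcases hdx' with h''|h''
            · exact Or.inr h''.symm
            · exact absurd (h'.trans h''.symm) Hcd
        have hcvy : cv y = ce s(v,x) ∨ cv y = ce s(v,y) := by
          rcases hcx' with h'|h'
          · rcases hdx' with h''|h''
            · exact absurd (h'.trans h''.symm) Hcd
            · exact Or.inr h''.symm
          · exact Or.inl h'.symm
        obtain ⟨t, ht⟩ := exists_notin h6le
          ((card4' (ce s(v,x)) (ce s(v,y)) (cv u) (cv v)).trans (by omega))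
        simp only [Finset.mem_insert, Finset.mem_singleton, not_or] at ht
        have htx : t ≠ cv x := by
          rcases hcvx with h'|h'
          · exact fun hh => ht.1 (hh.trans h')
          · exact fun hh => ht.2.1 (hh.trans h')
        have hty : t ≠ cv y := by
          rcases hcvy with h'|h'
          · exact fun hh => ht.1 (hh.trans h')
          · exact fun hh => ht.2.1 (hh.trans h')
        exact recolorV t (cv v) htx hty ht.2.2.1 ht.1 ht.2.1 ht.2.2.2
          Haq.symm Hbq.symm hqc hqd (fun hh => hpq hh.symm)
end

section
/- Let M ≥ 5 and let G be a graph with Δ(G) ≤ M containing a path x',u,x,v,y,w,y' with deg(u)=deg(v)=deg(w)=2, deg(x)=deg(y)=5, and with the additional edges xx', yy', xy, x'y, xy' in G. If G−{u,v,w} admits an (M+1)-total coloring, then G admits an (M+1)-total coloring. -/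
open SimpleGraph

lemma sym2_share {V : Type*} {m p q r s : V} (hm1 : m ∈ s(p, q)) (hm2 : m ∈ s(r, s)) :
    p = r ∨ p = s ∨ q = r ∨ q = s := by
  rw [Sym2.mem_iff] at hm1 hm2
  rcases hm1 with rfl | rfl <;> rcases hm2 with rfl | rfl <;> tauto

lemma exists_notin_s5 {k : ℕ} (s : Finset (Fin k)) (h : s.card < k) : ∃ c, c ∉ s := by
  by_contra h'
  push_neg at h'
  have hs : (Finset.univ : Finset (Fin k)) ⊆ s := fun c _ => h' c
  have := Finset.card_le_card hs
  simp at this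
  omega

lemma path_colors {k : ℕ} (hk : 6 ≤ k) (A0 B0 S1 S6 : Finset (Fin k)) (t0 : Fin k)
    (hA : A0.card ≤ 3) (hB : B0.card ≤ 3) (hS1 : S1.card < k) (hS6 : S6.card < k)
    (htA : t0 ∉ A0) (htB : t0 ∉ B0) :
    ∃ t c1 c2 c3 c4 c5 c6 : Fin k,
      t ∉ A0 ∧ t ∉ B0 ∧ c1 ∉ S1 ∧ c6 ∉ S6 ∧
      c2 ∉ A0 ∧ c3 ∉ A0 ∧ c4 ∉ B0 ∧ c5 ∉ B0 ∧
      c2 ≠ t ∧ c3 ≠ t ∧ c4 ≠ t ∧ c5 ≠ t ∧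
      c1 ≠ c2 ∧ c2 ≠ c3 ∧ c3 ≠ c4 ∧ c4 ≠ c5 ∧ c5 ≠ c6 := by
  classical
  set A : Finset (Fin k) := insert t0 A0 with hAdef
  set B : Finset (Fin k) := insert t0 B0 with hBdef
  have hAc : A.card ≤ 4 := le_trans (Finset.card_insert_le _ _) (by omega)
  have hBc : B.card ≤ 4 := le_trans (Finset.card_insert_le _ _) (by omega)
  have pick5 : ∀ (s : Finset (Fin k)) (a : Fin k), s.card ≤ 4 → ∃ c, c ∉ s ∧ c ≠ a := by
    intro s a hs
    obtain ⟨c, hc⟩ := exists_notin_s5 (insert a s) (lt_of_le_of_lt (Finset.card_insert_le _ _) (by omega))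
    exact ⟨c, fun h => hc (Finset.mem_insert_of_mem h), fun h => hc (h ▸ Finset.mem_insert_self a s)⟩
  have pick6 : ∀ (s : Finset (Fin k)) (a b : Fin k), s.card ≤ 3 →
      ∃ c, c ∉ s ∧ c ≠ a ∧ c ≠ b := by
    intro s a b hs
    obtain ⟨c, hc⟩ := exists_notin_s5 (insert a (insert b s))
      (lt_of_le_of_lt (le_trans (Finset.card_insert_le _ _)
        (Nat.succ_le_succ (Finset.card_insert_le _ _))) (by omega))
    refine ⟨c, fun h => hc (Finset.mem_insert_of_mem (Finset.mem_insert_of_mem h)), ?_, ?_⟩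
    · exact fun h => hc (h ▸ Finset.mem_insert_self _ _)
    · exact fun h => hc (Finset.mem_insert_of_mem (h ▸ Finset.mem_insert_self _ _))
  have memA0 : ∀ c, c ∉ A → c ∉ A0 := fun c hc h => hc (Finset.mem_insert_of_mem h)
  have memB0 : ∀ c, c ∉ B → c ∉ B0 := fun c hc h => hc (Finset.mem_insert_of_mem h)
  have neT : ∀ c, c ∉ A → c ≠ t0 := fun c hc h => hc (h ▸ Finset.mem_insert_self _ _)
  have neT' : ∀ c, c ∉ B → c ≠ t0 := fun c hc h => hc (h ▸ Finset.mem_insert_self _ _)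
  by_cases hc1A : ∃ c1, c1 ∉ S1 ∧ c1 ∈ A
  · obtain ⟨c1, hc1, hc1A⟩ := hc1A
    obtain ⟨c6, hc6⟩ := exists_notin_s5 S6 hS6
    obtain ⟨c5, hc5B, hc56⟩ := pick5 B c6 hBc
    obtain ⟨c4, hc4B, hc45⟩ := pick5 B c5 hBc
    obtain ⟨c3, hc3A, hc34⟩ := pick5 A c4 hAc
    obtain ⟨c2, hc2A, hc23⟩ := pick5 A c3 hAc
    exact ⟨t0, c1, c2, c3, c4, c5, c6, htA, htB, hc1, hc6, memA0 _ hc2A, memA0 _ hc3A,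
      memB0 _ hc4B, memB0 _ hc5B, neT _ hc2A, neT _ hc3A, neT' _ hc4B, neT' _ hc5B,
      fun h => hc2A (h ▸ hc1A), hc23, hc34, hc45, hc56⟩
  by_cases hc6B : ∃ c6, c6 ∉ S6 ∧ c6 ∈ B
  · obtain ⟨c6, hc6, hc6B⟩ := hc6B
    obtain ⟨c1, hc1⟩ := exists_notin_s5 S1 hS1
    obtain ⟨c2, hc2A, hc21⟩ := pick5 A c1 hAc
    obtain ⟨c3, hc3A, hc32⟩ := pick5 A c2 hAc
    obtain ⟨c4, hc4B, hc43⟩ := pick5 B c3 hBc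
    obtain ⟨c5, hc5B, hc54⟩ := pick5 B c4 hBc
    exact ⟨t0, c1, c2, c3, c4, c5, c6, htA, htB, hc1, hc6, memA0 _ hc2A, memA0 _ hc3A,
      memB0 _ hc4B, memB0 _ hc5B, neT _ hc2A, neT _ hc3A, neT' _ hc4B, neT' _ hc5B,
      hc21.symm, hc32.symm, hc43.symm, hc54.symm, fun h => hc5B (h ▸ hc6B)⟩
  push_neg at hc1A hc6B
  by_cases h3a : ∃ c1 c6, c1 ∉ S1 ∧ c6 ∉ S6 ∧ c1 ≠ c6
  · obtain ⟨c1, c6, hc1, hc6, hne⟩ := h3a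
    have hc1A' : c1 ∉ A := hc1A c1 hc1
    have hc6B' : c6 ∉ B := hc6B c6 hc6
    obtain ⟨c2, hc2A, hc21⟩ := pick5 A c1 hAc
    obtain ⟨c5, hc5B, hc56⟩ := pick5 B c6 hBc
    exact ⟨t0, c1, c2, c1, c6, c5, c6, htA, htB, hc1, hc6, memA0 _ hc2A, memA0 _ hc1A',
      memB0 _ hc6B', memB0 _ hc5B, neT _ hc2A, neT _ hc1A', neT' _ hc6B', neT' _ hc5B,
      hc21.symm, hc21, hne, Ne.symm hc56, hc56⟩
  · push_neg at h3a
    obtain ⟨α, hα⟩ := exists_notin_s5 S1 hS1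
    obtain ⟨β, hβ⟩ := exists_notin_s5 S6 hS6
    have hαβ : α = β := h3a α β hα hβ
    subst hαβ
    have hαA : α ∉ A := hc1A α hα
    have hαB : α ∉ B := hc6B α hβ
    have ht0α : t0 ≠ α := fun h => hαA (h ▸ Finset.mem_insert_self _ _)
    obtain ⟨c2, hc2, hc2α, hc2t⟩ := pick6 A0 α t0 hA
    obtain ⟨c4, hc4, hc4α, hc4t⟩ := pick6 B0 α t0 hB
    exact ⟨α, α, c2, t0, c4, t0, α, memA0 _ hαA, memB0 _ hαB, hα, hβ, hc2, htA, hc4, htB,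
      hc2α, ht0α, hc4α, ht0α, Ne.symm hc2α, hc2t, fun h => hc4t h.symm,
      hc4t, ht0α⟩

theorem stmt_5 {V : Type*} [Fintype V] (G : SimpleGraph V) [DecidableRel G.Adj]
    (x' u x v y w y' : V) (M : ℕ) (hM : 5 ≤ M) (hDelta : G.maxDegree ≤ M)
    (hnd : ([x', u, x, v, y, w, y'] : List V).Nodup)
    (h1 : G.Adj x' u) (h2 : G.Adj u x) (h3 : G.Adj x v) (h4 : G.Adj v y)
    (h5 : G.Adj y w) (h6 : G.Adj w y')
    (h7 : G.Adj x x') (h8 : G.Adj y y') (h9 : G.Adj x y) (h10 : G.Adj x' y)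
    (h11 : G.Adj x y')
    (hdu : G.degree u = 2) (hdv : G.degree v = 2) (hdw : G.degree w = 2)
    (hdx : G.degree x = 5) (hdy : G.degree y = 5)
    (h : HasTotalColoring (G.induce ({u, v, w}ᶜ : Set V)) (M + 1)) :
    HasTotalColoring G (M + 1) := by
  classical
  haveI : Nonempty V := ⟨x⟩
  simp only [List.nodup_cons, List.mem_cons, List.mem_singleton, List.not_mem_nil,
    not_or, or_false, List.nodup_nil, and_true] at hnd
  obtain ⟨⟨nx'u, nx'x, nx'v, nx'y, nx'w, nx'y'⟩, ⟨nux, nuv, nuy, nuw, nuy'⟩,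
    ⟨nxv, nxy, nxw, nxy'⟩, ⟨nvy, nvw, nvy'⟩, ⟨nyw, nyy'⟩, nwy', -⟩ := hnd
  set T : Set V := ({u, v, w}ᶜ : Set V) with hTdef
  obtain ⟨cv, ce, hcv, hce, hcve⟩ := h
  have hmemT : ∀ z : V, z ≠ u → z ≠ v → z ≠ w → z ∈ T := by
    intro z hzu hzv hzw
    simp only [hTdef, Set.mem_compl_iff, Set.mem_insert_iff, Set.mem_singleton_iff]
    tauto
  have huT : u ∉ T := by simp [hTdef]
  have hvT : v ∉ T := by simp [hTdef]
  have hwT : w ∉ T := by simp [hTdef]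
  have hTne : ∀ z : V, z ∈ T → z ≠ u ∧ z ≠ v ∧ z ≠ w := by
    intro z hz
    refine ⟨?_, ?_, ?_⟩ <;> rintro rfl <;> [exact huT hz; exact hvT hz; exact hwT hz]
  have hxT : x ∈ T := hmemT x (Ne.symm nux) nxv nxw
  have hyT : y ∈ T := hmemT y (Ne.symm nuy) (Ne.symm nvy) nyw
  have hx'T : x' ∈ T := hmemT x' nx'u nx'v nx'w
  have hy'T : y' ∈ T := hmemT y' (Ne.symm nuy') (Ne.symm nvy') (Ne.symm nwy')
  -- the edge-color and vertex-color lookup functions on `V`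
  obtain ⟨oe, oe_symm, oe_eval⟩ :
      ∃ oe : V → V → Fin (M + 1), (∀ a b, oe a b = oe b a) ∧
        ∀ a b (ha : a ∈ T) (hb : b ∈ T), oe a b = ce s(⟨a, ha⟩, ⟨b, hb⟩) := by
    refine ⟨fun a b => if ha : a ∈ T then if hb : b ∈ T then ce s(⟨a, ha⟩, ⟨b, hb⟩) else 0
      else 0, ?_, ?_⟩
    · intro a b
      by_cases ha : a ∈ T <;> by_cases hb : b ∈ T <;> simp [ha, hb]
      rw [Sym2.eq_swap]
    · intro a b ha hb
      simp [ha, hb]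
  -- neighborhood characterizations
  have hNfin : ∀ (z : V) (s : Finset V), (∀ a ∈ s, G.Adj z a) → s.card = G.degree z →
      ∀ c, G.Adj z c → c ∈ s := by
    intro z s hs hcard c hc
    have hsub : s ⊆ G.neighborFinset z := fun a ha => (G.mem_neighborFinset z a).2 (hs a ha)
    have heq : s = G.neighborFinset z :=
      Finset.eq_of_subset_of_card_le hsub (by rw [G.card_neighborFinset_eq_degree, hcard])
    rw [heq]
    exact (G.mem_neighborFinset z c).2 hc
  have hNu : ∀ c, G.Adj u c → c = x' ∨ c = x := by
    intro c hc
    have := hNfin u {x', x} (by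
        intro a ha
        simp only [Finset.mem_insert, Finset.mem_singleton] at ha
        rcases ha with rfl | rfl
        exacts [h1.symm, h2])
      (by rw [Finset.card_insert_of_notMem (by simp [nx'x]), Finset.card_singleton, hdu]) c hc
    simpa using this
  have hNv : ∀ c, G.Adj v c → c = x ∨ c = y := by
    intro c hc
    have := hNfin v {x, y} (by
        intro a ha
        simp only [Finset.mem_insert, Finset.mem_singleton] at ha
        rcases ha with rfl | rfl
        exacts [h3.symm, h4])
      (by rw [Finset.card_insert_of_notMem (by simp [nxy]), Finset.card_singleton, hdv]) c hc
    simpa using this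
  have hNw : ∀ c, G.Adj w c → c = y ∨ c = y' := by
    intro c hc
    have := hNfin w {y, y'} (by
        intro a ha
        simp only [Finset.mem_insert, Finset.mem_singleton] at ha
        rcases ha with rfl | rfl
        exacts [h5.symm, h6])
      (by rw [Finset.card_insert_of_notMem (by simp [nyy']), Finset.card_singleton, hdw]) c hc
    simpa using this
  have hNx : ∀ c, G.Adj x c → c = u ∨ c = v ∨ c = x' ∨ c = y ∨ c = y' := by
    intro c hc
    have := hNfin x {u, v, x', y, y'} (by
        intro a ha
        simp only [Finset.mem_insert, Finset.mem_singleton] at ha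
        rcases ha with rfl | rfl | rfl | rfl | rfl
        exacts [h2.symm, h3, h7, h9, h11])
      (by
        rw [Finset.card_insert_of_notMem (by
            simp only [Finset.mem_insert, Finset.mem_singleton, not_or]
            exact ⟨nuv, Ne.symm nx'u, nuy, nuy'⟩),
          Finset.card_insert_of_notMem (by
            simp only [Finset.mem_insert, Finset.mem_singleton, not_or]
            exact ⟨Ne.symm nx'v, nvy, nvy'⟩),
          Finset.card_insert_of_notMem (by
            simp only [Finset.mem_insert, Finset.mem_singleton, not_or]
            exact ⟨nx'y, nx'y'⟩),
          Finset.card_insert_of_notMem (by simp [nyy']), Finset.card_singleton, hdx]) c hc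
    simpa using this
  have hNy : ∀ c, G.Adj y c → c = v ∨ c = w ∨ c = x ∨ c = x' ∨ c = y' := by
    intro c hc
    have := hNfin y {v, w, x, x', y'} (by
        intro a ha
        simp only [Finset.mem_insert, Finset.mem_singleton] at ha
        rcases ha with rfl | rfl | rfl | rfl | rfl
        exacts [h4.symm, h5, h9.symm, h10.symm, h8])
      (by
        rw [Finset.card_insert_of_notMem (by
            simp only [Finset.mem_insert, Finset.mem_singleton, not_or]
            exact ⟨nvw, Ne.symm nxv, Ne.symm nx'v, nvy'⟩),
          Finset.card_insert_of_notMem (by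
            simp only [Finset.mem_insert, Finset.mem_singleton, not_or]
            exact ⟨Ne.symm nxw, Ne.symm nx'w, nwy'⟩),
          Finset.card_insert_of_notMem (by
            simp only [Finset.mem_insert, Finset.mem_singleton, not_or]
            exact ⟨Ne.symm nx'x, nxy'⟩),
          Finset.card_insert_of_notMem (by simp [nx'y']), Finset.card_singleton, hdy]) c hc
    simpa using this
  have hdeg : ∀ z : V, G.degree z ≤ M := fun z => le_trans (G.degree_le_maxDegree z) hDelta

  -- induced-graph helpers
  have adjT : ∀ (a b : V) (ha : a ∈ T) (hb : b ∈ T), G.Adj a b →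
      s(⟨a, ha⟩, ⟨b, hb⟩) ∈ (G.induce T).edgeSet := by
    intro a b ha hb hab
    rw [mem_edgeSet]
    simpa using hab
  have oe_ne : ∀ (a b c d : V) (ha : a ∈ T) (hb : b ∈ T) (hc : c ∈ T) (hd : d ∈ T),
      G.Adj a b → G.Adj c d → s(a, b) ≠ s(c, d) → (a = c ∨ a = d ∨ b = c ∨ b = d) →
      oe a b ≠ oe c d := by
    intro a b c d ha hb hc hd hab hcd hne hsh
    rw [oe_eval a b ha hb, oe_eval c d hc hd]
    apply hce _ _ (adjT a b ha hb hab) (adjT c d hc hd hcd)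
    · intro hEq
      apply hne
      have := congrArg (Sym2.map Subtype.val) hEq
      simpa using this
    · rcases hsh with rfl | rfl | rfl | rfl
      · exact ⟨⟨a, ha⟩, by simp, by simp⟩
      · exact ⟨⟨a, ha⟩, by simp, by simp⟩
      · exact ⟨⟨b, hb⟩, by simp, by simp⟩
      · exact ⟨⟨b, hb⟩, by simp, by simp⟩
  have cv_ne_cv : ∀ (a b : V) (ha : a ∈ T) (hb : b ∈ T), G.Adj a b →
      cv ⟨a, ha⟩ ≠ cv ⟨b, hb⟩ := by
    intro a b ha hb hab
    exact hcv (by simpa using hab)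
  have cv_ne_oe : ∀ (z a b : V) (hz : z ∈ T) (ha : a ∈ T) (hb : b ∈ T), G.Adj a b →
      (z = a ∨ z = b) → cv ⟨z, hz⟩ ≠ oe a b := by
    intro z a b hz ha hb hab hsh
    rw [oe_eval a b ha hb]
    apply hcve _ _ (adjT a b ha hb hab)
    rcases hsh with rfl | rfl
    · simp
    · simp
  -- forbidden color sets
  obtain ⟨S1, hS1card, hS1mem, hS1cv⟩ :
      ∃ S1 : Finset (Fin (M + 1)), S1.card < M + 1 ∧
        (∀ z, G.Adj x' z → z ≠ u → oe x' z ∈ S1) ∧ cv ⟨x', hx'T⟩ ∈ S1 := by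
    refine ⟨((G.neighborFinset x').erase u).image (oe x') ∪ {cv ⟨x', hx'T⟩}, ?_, ?_, ?_⟩
    · have e1 : ((G.neighborFinset x').erase u).card = G.degree x' - 1 := by
        rw [Finset.card_erase_of_mem ((G.mem_neighborFinset _ _).2 h1),
          G.card_neighborFinset_eq_degree]
      have e2 : (((G.neighborFinset x').erase u).image (oe x')).card ≤ G.degree x' - 1 :=
        e1 ▸ Finset.card_image_le
      have e3 := Finset.card_union_le (((G.neighborFinset x').erase u).image (oe x'))
        ({cv ⟨x', hx'T⟩} : Finset (Fin (M + 1)))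
      simp only [Finset.card_singleton] at e3
      have := hdeg x'
      omega
    · intro z hz hzu
      exact Finset.mem_union_left _ (Finset.mem_image_of_mem _
        (Finset.mem_erase.2 ⟨hzu, (G.mem_neighborFinset _ _).2 hz⟩))
    · exact Finset.mem_union_right _ (Finset.mem_singleton_self _)
  obtain ⟨S6, hS6card, hS6mem, hS6cv⟩ :
      ∃ S6 : Finset (Fin (M + 1)), S6.card < M + 1 ∧
        (∀ z, G.Adj y' z → z ≠ w → oe y' z ∈ S6) ∧ cv ⟨y', hy'T⟩ ∈ S6 := by
    refine ⟨((G.neighborFinset y').erase w).image (oe y') ∪ {cv ⟨y', hy'T⟩}, ?_, ?_, ?_⟩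
    · have e1 : ((G.neighborFinset y').erase w).card = G.degree y' - 1 := by
        rw [Finset.card_erase_of_mem ((G.mem_neighborFinset _ _).2 h6.symm),
          G.card_neighborFinset_eq_degree]
      have e2 : (((G.neighborFinset y').erase w).image (oe y')).card ≤ G.degree y' - 1 :=
        e1 ▸ Finset.card_image_le
      have e3 := Finset.card_union_le (((G.neighborFinset y').erase w).image (oe y'))
        ({cv ⟨y', hy'T⟩} : Finset (Fin (M + 1)))
      simp only [Finset.card_singleton] at e3
      have := hdeg y'
      omega
    · intro z hz hzw
      exact Finset.mem_union_left _ (Finset.mem_image_of_mem _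
        (Finset.mem_erase.2 ⟨hzw, (G.mem_neighborFinset _ _).2 hz⟩))
    · exact Finset.mem_union_right _ (Finset.mem_singleton_self _)
  obtain ⟨A0, hA0card, hA0xx', hA0xy', hA0cvx, hA0elim⟩ :
      ∃ A0 : Finset (Fin (M + 1)), A0.card ≤ 3 ∧ oe x x' ∈ A0 ∧ oe x y' ∈ A0 ∧
        cv ⟨x, hxT⟩ ∈ A0 ∧ ∀ c ∈ A0, c = oe x x' ∨ c = oe x y' ∨ c = cv ⟨x, hxT⟩ := by
    refine ⟨{oe x x', oe x y', cv ⟨x, hxT⟩}, ?_, by simp, by simp, by simp, ?_⟩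
    · have i1 := Finset.card_insert_le (oe x x') ({oe x y', cv ⟨x, hxT⟩} : Finset (Fin (M + 1)))
      have i2 := Finset.card_insert_le (oe x y') ({cv ⟨x, hxT⟩} : Finset (Fin (M + 1)))
      have i3 : ({cv ⟨x, hxT⟩} : Finset (Fin (M + 1))).card = 1 := Finset.card_singleton _
      omega
    · intro c hc
      simpa using hc
  obtain ⟨B0, hB0card, hB0yy', hB0yx', hB0cvy, hB0elim⟩ :
      ∃ B0 : Finset (Fin (M + 1)), B0.card ≤ 3 ∧ oe y y' ∈ B0 ∧ oe y x' ∈ B0 ∧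
        cv ⟨y, hyT⟩ ∈ B0 ∧ ∀ c ∈ B0, c = oe y y' ∨ c = oe y x' ∨ c = cv ⟨y, hyT⟩ := by
    refine ⟨{oe y y', oe y x', cv ⟨y, hyT⟩}, ?_, by simp, by simp, by simp, ?_⟩
    · have i1 := Finset.card_insert_le (oe y y') ({oe y x', cv ⟨y, hyT⟩} : Finset (Fin (M + 1)))
      have i2 := Finset.card_insert_le (oe y x') ({cv ⟨y, hyT⟩} : Finset (Fin (M + 1)))
      have i3 : ({cv ⟨y, hyT⟩} : Finset (Fin (M + 1))).card = 1 := Finset.card_singleton _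
      omega
    · intro c hc
      simpa using hc
  have keyA : ∀ q, q ∈ T → G.Adj x q → q ≠ y → oe x q ∈ A0 := by
    intro q hq hadj hqy
    rcases hNx q hadj with rfl | rfl | rfl | rfl | rfl
    · exact absurd hq huT
    · exact absurd hq hvT
    · exact hA0xx'
    · exact absurd rfl hqy
    · exact hA0xy'
  have keyB : ∀ q, q ∈ T → G.Adj y q → q ≠ x → oe y q ∈ B0 := by
    intro q hq hadj hqx
    rcases hNy q hadj with rfl | rfl | rfl | rfl | rfl
    · exact absurd hq hvT
    · exact absurd hq hwT
    · exact absurd rfl hqx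
    · exact hB0yx'
    · exact hB0yy'
  -- the old color of xy avoids both A0 and B0
  have htA : oe x y ∉ A0 := by
    intro hmem
    rcases hA0elim _ hmem with hh | hh | hh
    · exact oe_ne x y x x' hxT hyT hxT hx'T h9 h7
        (by intro hEq; rcases Sym2.eq_iff.1 hEq with (⟨ha, hb⟩ | ⟨ha, hb⟩); exacts [nx'y hb.symm, nx'x ha.symm])
        (Or.inl rfl) hh
    · exact oe_ne x y x y' hxT hyT hxT hy'T h9 h11
        (by intro hEq; rcases Sym2.eq_iff.1 hEq with (⟨ha, hb⟩ | ⟨ha, hb⟩); exacts [nyy' hb, nxy' ha])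
        (Or.inl rfl) hh
    · exact cv_ne_oe x x y hxT hxT hyT h9 (Or.inl rfl) hh.symm
  have htB : oe x y ∉ B0 := by
    intro hmem
    rcases hB0elim _ hmem with hh | hh | hh
    · exact oe_ne x y y y' hxT hyT hyT hy'T h9 h8
        (by intro hEq; rcases Sym2.eq_iff.1 hEq with (⟨ha, hb⟩ | ⟨ha, hb⟩); exacts [nxy ha, nxy' ha])
        (Or.inr (Or.inr (Or.inl rfl))) hh
    · exact oe_ne x y y x' hxT hyT hyT hx'T h9 h10.symm
        (by intro hEq; rcases Sym2.eq_iff.1 hEq with (⟨ha, hb⟩ | ⟨ha, hb⟩); exacts [nxy ha, nx'x ha.symm])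
        (Or.inr (Or.inr (Or.inl rfl))) hh
    · exact cv_ne_oe y x y hyT hxT hyT h9 (Or.inr rfl) hh.symm
  -- choose the new colors
  obtain ⟨t, c1, c2, c3, c4, c5, c6, htA', htB', hc1S1, hc6S6, hc2A, hc3A, hc4B, hc5B,
    hc2t, hc3t, hc4t, hc5t, hc12, hc23, hc34, hc45, hc56⟩ :=
    path_colors (by omega) A0 B0 S1 S6 (oe x y) hA0card hB0card hS1card hS6card htA htB
  have pickv : ∀ a b c d : Fin (M + 1), ∃ e : Fin (M + 1), e ≠ a ∧ e ≠ b ∧ e ≠ c ∧ e ≠ d := by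
    intro a b c d
    obtain ⟨e, he⟩ := exists_notin_s5 {a, b, c, d} (by
      have i1 := Finset.card_insert_le a ({b, c, d} : Finset (Fin (M + 1)))
      have i2 := Finset.card_insert_le b ({c, d} : Finset (Fin (M + 1)))
      have i3 := Finset.card_insert_le c ({d} : Finset (Fin (M + 1)))
      have i4 : ({d} : Finset (Fin (M + 1))).card = 1 := Finset.card_singleton _
      omega)
    simp only [Finset.mem_insert, Finset.mem_singleton, not_or] at he
    exact ⟨e, he.1, he.2.1, he.2.2.1, he.2.2.2⟩
  obtain ⟨cu, hcux', hcux, hcu1, hcu2⟩ := pickv (cv ⟨x', hx'T⟩) (cv ⟨x, hxT⟩) c1 c2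
  obtain ⟨cV, hcVx, hcVy, hcV3, hcV4⟩ := pickv (cv ⟨x, hxT⟩) (cv ⟨y, hyT⟩) c3 c4
  obtain ⟨cW, hcWy, hcWy', hcW5, hcW6⟩ := pickv (cv ⟨y, hyT⟩) (cv ⟨y', hy'T⟩) c5 c6
  -- the new vertex coloring
  obtain ⟨cvN, hcvNu, hcvNv, hcvNw, hcvNold⟩ :
      ∃ f : V → Fin (M + 1), f u = cu ∧ f v = cV ∧ f w = cW ∧
        ∀ z (hz : z ∈ T), f z = cv ⟨z, hz⟩ := by
    refine ⟨fun z => if hzu : z = u then cu else if hzv : z = v then cV else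
      if hzw : z = w then cW else if hz : z ∈ T then cv ⟨z, hz⟩ else 0, ?_, ?_, ?_, ?_⟩
    · beta_reduce
      rw [dif_pos rfl]
    · beta_reduce
      rw [dif_neg (fun h => nuv h.symm), dif_pos rfl]
    · beta_reduce
      rw [dif_neg (fun h => nuw h.symm), dif_neg (fun h => nvw h.symm), dif_pos rfl]
    · intro z hz
      beta_reduce
      rw [dif_neg (hTne z hz).1, dif_neg (hTne z hz).2.1, dif_neg (hTne z hz).2.2, dif_pos hz]

  -- disequalities between the special edges
  have E21 : s(u, x) ≠ s(x', u) := by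
    intro hEq; rcases Sym2.eq_iff.1 hEq with (⟨ha, hb⟩ | ⟨ha, hb⟩)
    exacts [nx'u ha.symm, nx'x hb.symm]
  have E31 : s(x, v) ≠ s(x', u) := by
    intro hEq; rcases Sym2.eq_iff.1 hEq with (⟨ha, hb⟩ | ⟨ha, hb⟩)
    exacts [nx'x ha.symm, nux ha.symm]
  have E32 : s(x, v) ≠ s(u, x) := by
    intro hEq; rcases Sym2.eq_iff.1 hEq with (⟨ha, hb⟩ | ⟨ha, hb⟩)
    exacts [nux ha.symm, nuv hb.symm]
  have E41 : s(v, y) ≠ s(x', u) := by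
    intro hEq; rcases Sym2.eq_iff.1 hEq with (⟨ha, hb⟩ | ⟨ha, hb⟩)
    exacts [nx'v ha.symm, nuv ha.symm]
  have E42 : s(v, y) ≠ s(u, x) := by
    intro hEq; rcases Sym2.eq_iff.1 hEq with (⟨ha, hb⟩ | ⟨ha, hb⟩)
    exacts [nuv ha.symm, nxv ha.symm]
  have E43 : s(v, y) ≠ s(x, v) := by
    intro hEq; rcases Sym2.eq_iff.1 hEq with (⟨ha, hb⟩ | ⟨ha, hb⟩)
    exacts [nxv ha.symm, nxy hb.symm]
  have E51 : s(y, w) ≠ s(x', u) := by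
    intro hEq; rcases Sym2.eq_iff.1 hEq with (⟨ha, hb⟩ | ⟨ha, hb⟩)
    exacts [nx'y ha.symm, nuy ha.symm]
  have E52 : s(y, w) ≠ s(u, x) := by
    intro hEq; rcases Sym2.eq_iff.1 hEq with (⟨ha, hb⟩ | ⟨ha, hb⟩)
    exacts [nuy ha.symm, nxy ha.symm]
  have E53 : s(y, w) ≠ s(x, v) := by
    intro hEq; rcases Sym2.eq_iff.1 hEq with (⟨ha, hb⟩ | ⟨ha, hb⟩)
    exacts [nxy ha.symm, nvy ha.symm]
  have E54 : s(y, w) ≠ s(v, y) := by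
    intro hEq; rcases Sym2.eq_iff.1 hEq with (⟨ha, hb⟩ | ⟨ha, hb⟩)
    exacts [nvy ha.symm, nvw hb.symm]
  have E61 : s(w, y') ≠ s(x', u) := by
    intro hEq; rcases Sym2.eq_iff.1 hEq with (⟨ha, hb⟩ | ⟨ha, hb⟩)
    exacts [nx'w ha.symm, nuw ha.symm]
  have E62 : s(w, y') ≠ s(u, x) := by
    intro hEq; rcases Sym2.eq_iff.1 hEq with (⟨ha, hb⟩ | ⟨ha, hb⟩)
    exacts [nuw ha.symm, nxw ha.symm]
  have E63 : s(w, y') ≠ s(x, v) := by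
    intro hEq; rcases Sym2.eq_iff.1 hEq with (⟨ha, hb⟩ | ⟨ha, hb⟩)
    exacts [nxw ha.symm, nvw ha.symm]
  have E64 : s(w, y') ≠ s(v, y) := by
    intro hEq; rcases Sym2.eq_iff.1 hEq with (⟨ha, hb⟩ | ⟨ha, hb⟩)
    exacts [nvw ha.symm, nyw ha.symm]
  have E65 : s(w, y') ≠ s(y, w) := by
    intro hEq; rcases Sym2.eq_iff.1 hEq with (⟨ha, hb⟩ | ⟨ha, hb⟩)
    exacts [nyw ha.symm, nyy' hb.symm]
  have E71 : s(x, y) ≠ s(x', u) := by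
    intro hEq; rcases Sym2.eq_iff.1 hEq with (⟨ha, hb⟩ | ⟨ha, hb⟩)
    exacts [nx'x ha.symm, nux ha.symm]
  have E72 : s(x, y) ≠ s(u, x) := by
    intro hEq; rcases Sym2.eq_iff.1 hEq with (⟨ha, hb⟩ | ⟨ha, hb⟩)
    exacts [nux ha.symm, nuy hb.symm]
  have E73 : s(x, y) ≠ s(x, v) := by
    intro hEq; rcases Sym2.eq_iff.1 hEq with (⟨ha, hb⟩ | ⟨ha, hb⟩)
    exacts [nvy hb.symm, nxv ha]
  have E74 : s(x, y) ≠ s(v, y) := by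
    intro hEq; rcases Sym2.eq_iff.1 hEq with (⟨ha, hb⟩ | ⟨ha, hb⟩)
    exacts [nxv ha, nxy ha]
  have E75 : s(x, y) ≠ s(y, w) := by
    intro hEq; rcases Sym2.eq_iff.1 hEq with (⟨ha, hb⟩ | ⟨ha, hb⟩)
    exacts [nxy ha, nxw ha]
  have E76 : s(x, y) ≠ s(w, y') := by
    intro hEq; rcases Sym2.eq_iff.1 hEq with (⟨ha, hb⟩ | ⟨ha, hb⟩)
    exacts [nxw ha, nxy' ha]
  -- the new edge coloring
  obtain ⟨ceN, hP1, hP2, hP3, hP4, hP5, hP6, hXY, hOLD⟩ :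
      ∃ g : Sym2 V → Fin (M + 1),
        g s(x', u) = c1 ∧ g s(u, x) = c2 ∧ g s(x, v) = c3 ∧ g s(v, y) = c4 ∧
        g s(y, w) = c5 ∧ g s(w, y') = c6 ∧ g s(x, y) = t ∧
        ∀ a b, a ∈ T → b ∈ T → s(a, b) ≠ s(x, y) → g s(a, b) = oe a b := by
    refine ⟨fun e => if e = s(x', u) then c1 else if e = s(u, x) then c2 else
      if e = s(x, v) then c3 else if e = s(v, y) then c4 else if e = s(y, w) then c5 else
      if e = s(w, y') then c6 else if e = s(x, y) then t else Sym2.lift ⟨oe, oe_symm⟩ e,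
      ?_, ?_, ?_, ?_, ?_, ?_, ?_, ?_⟩
    · beta_reduce
      rw [if_pos rfl]
    · beta_reduce
      rw [if_neg E21, if_pos rfl]
    · beta_reduce
      rw [if_neg E31, if_neg E32, if_pos rfl]
    · beta_reduce
      rw [if_neg E41, if_neg E42, if_neg E43, if_pos rfl]
    · beta_reduce
      rw [if_neg E51, if_neg E52, if_neg E53, if_neg E54, if_pos rfl]
    · beta_reduce
      rw [if_neg E61, if_neg E62, if_neg E63, if_neg E64, if_neg E65, if_pos rfl]
    · beta_reduce
      rw [if_neg E71, if_neg E72, if_neg E73, if_neg E74, if_neg E75, if_neg E76, if_pos rfl]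
    · intro a b ha hb hne
      have hau := (hTne a ha).1
      have hav := (hTne a ha).2.1
      have haw := (hTne a ha).2.2
      have hbu := (hTne b hb).1
      have hbv := (hTne b hb).2.1
      have hbw := (hTne b hb).2.2
      beta_reduce
      rw [if_neg (fun hEq => by
          rcases Sym2.eq_iff.1 hEq with (⟨h', h''⟩ | ⟨h', h''⟩)
          exacts [hbu h'', hau h']),
        if_neg (fun hEq => by
          rcases Sym2.eq_iff.1 hEq with (⟨h', h''⟩ | ⟨h', h''⟩)
          exacts [hau h', hbu h'']),
        if_neg (fun hEq => by
          rcases Sym2.eq_iff.1 hEq with (⟨h', h''⟩ | ⟨h', h''⟩)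
          exacts [hbv h'', hav h']),
        if_neg (fun hEq => by
          rcases Sym2.eq_iff.1 hEq with (⟨h', h''⟩ | ⟨h', h''⟩)
          exacts [hav h', hbv h'']),
        if_neg (fun hEq => by
          rcases Sym2.eq_iff.1 hEq with (⟨h', h''⟩ | ⟨h', h''⟩)
          exacts [hbw h'', haw h']),
        if_neg (fun hEq => by
          rcases Sym2.eq_iff.1 hEq with (⟨h', h''⟩ | ⟨h', h''⟩)
          exacts [haw h', hbw h'']),
        if_neg hne]
      exact Sym2.lift_mk _ _ _
  -- classification of edges of G
  have hclass : ∀ e ∈ G.edgeSet, e = s(x', u) ∨ e = s(u, x) ∨ e = s(x, v) ∨ e = s(v, y) ∨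
      e = s(y, w) ∨ e = s(w, y') ∨
      ∃ a b, a ∈ T ∧ b ∈ T ∧ e = s(a, b) ∧ G.Adj a b := by
    intro e
    induction e using Sym2.ind with
    | _ a b =>
      intro he
      rw [mem_edgeSet] at he
      by_cases hau : a = u
      · subst hau
        rcases hNu b he with rfl | rfl
        · exact Or.inl Sym2.eq_swap
        · exact Or.inr (Or.inl rfl)
      by_cases hbu : b = u
      · subst hbu
        rcases hNu a he.symm with rfl | rfl
        · exact Or.inl rfl
        · exact Or.inr (Or.inl Sym2.eq_swap)
      by_cases hav : a = v
      · subst hav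
        rcases hNv b he with rfl | rfl
        · exact Or.inr (Or.inr (Or.inl Sym2.eq_swap))
        · exact Or.inr (Or.inr (Or.inr (Or.inl rfl)))
      by_cases hbv : b = v
      · subst hbv
        rcases hNv a he.symm with rfl | rfl
        · exact Or.inr (Or.inr (Or.inl rfl))
        · exact Or.inr (Or.inr (Or.inr (Or.inl Sym2.eq_swap)))
      by_cases haw : a = w
      · subst haw
        rcases hNw b he with rfl | rfl
        · exact Or.inr (Or.inr (Or.inr (Or.inr (Or.inl Sym2.eq_swap))))
        · exact Or.inr (Or.inr (Or.inr (Or.inr (Or.inr (Or.inl rfl)))))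
      by_cases hbw : b = w
      · subst hbw
        rcases hNw a he.symm with rfl | rfl
        · exact Or.inr (Or.inr (Or.inr (Or.inr (Or.inl rfl))))
        · exact Or.inr (Or.inr (Or.inr (Or.inr (Or.inr (Or.inl Sym2.eq_swap)))))
      · exact Or.inr (Or.inr (Or.inr (Or.inr (Or.inr (Or.inr
          ⟨a, b, hmemT a hau hav haw, hmemT b hbu hbv hbw, rfl, he⟩)))))
  refine ⟨cvN, ceN, ?_, ?_, ?_⟩
  · -- vertex-vertex
    intro a b hab
    by_cases hau : a = u
    · rw [hau] at hab ⊢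
      rw [hcvNu]
      rcases hNu b hab with hb' | hb'
      · rw [hb', hcvNold x' hx'T]; exact hcux'
      · rw [hb', hcvNold x hxT]; exact hcux
    by_cases hav : a = v
    · rw [hav] at hab ⊢
      rw [hcvNv]
      rcases hNv b hab with hb' | hb'
      · rw [hb', hcvNold x hxT]; exact hcVx
      · rw [hb', hcvNold y hyT]; exact hcVy
    by_cases haw : a = w
    · rw [haw] at hab ⊢
      rw [hcvNw]
      rcases hNw b hab with hb' | hb'
      · rw [hb', hcvNold y hyT]; exact hcWy
      · rw [hb', hcvNold y' hy'T]; exact hcWy'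
    by_cases hbu : b = u
    · rw [hbu] at hab ⊢
      rw [hcvNu]
      rcases hNu a hab.symm with ha' | ha'
      · rw [ha', hcvNold x' hx'T]; exact hcux'.symm
      · rw [ha', hcvNold x hxT]; exact hcux.symm
    by_cases hbv : b = v
    · rw [hbv] at hab ⊢
      rw [hcvNv]
      rcases hNv a hab.symm with ha' | ha'
      · rw [ha', hcvNold x hxT]; exact hcVx.symm
      · rw [ha', hcvNold y hyT]; exact hcVy.symm
    by_cases hbw : b = w
    · rw [hbw] at hab ⊢
      rw [hcvNw]
      rcases hNw a hab.symm with ha' | ha'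
      · rw [ha', hcvNold y hyT]; exact hcWy.symm
      · rw [ha', hcvNold y' hy'T]; exact hcWy'.symm
    · have haT := hmemT a hau hav haw
      have hbT := hmemT b hbu hbv hbw
      rw [hcvNold a haT, hcvNold b hbT]
      exact cv_ne_cv a b haT hbT hab
  · -- edge-edge
    intro e f he hf hef hsh
    obtain ⟨m, hme, hmf⟩ := hsh
    rcases hclass e he with rfl | rfl | rfl | rfl | rfl | rfl | ⟨a, b, ha, hb, rfl, hab⟩
    · -- e = P1
      rcases hclass f hf with rfl | rfl | rfl | rfl | rfl | rfl | ⟨a2, b2, ha2, hb2, rfl, hab2⟩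
      · exact absurd rfl hef
      · rw [hP1, hP2]
        exact hc12
      · rcases sym2_share hme hmf with hq | hq | hq | hq
        exacts [absurd hq nx'x, absurd hq nx'v, absurd hq nux, absurd hq nuv]
      · rcases sym2_share hme hmf with hq | hq | hq | hq
        exacts [absurd hq nx'v, absurd hq nx'y, absurd hq nuv, absurd hq nuy]
      · rcases sym2_share hme hmf with hq | hq | hq | hq
        exacts [absurd hq nx'y, absurd hq nx'w, absurd hq nuy, absurd hq nuw]
      · rcases sym2_share hme hmf with hq | hq | hq | hq
        exacts [absurd hq nx'w, absurd hq nx'y', absurd hq nuw, absurd hq nuy']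
      · -- P1 vs OLD
        by_cases hxy : s(a2, b2) = s(x, y)
        · rw [hxy] at hmf
          rcases sym2_share hme hmf with hq | hq | hq | hq
          exacts [absurd hq nx'x, absurd hq nx'y, absurd hq nux, absurd hq nuy]
        · rw [hP1, hOLD a2 b2 ha2 hb2 hxy]
          have hme2 := hme
          rcases Sym2.mem_iff.1 hmf with hq | hq
          · rw [hq] at hme2
            rcases Sym2.mem_iff.1 hme2 with hq2 | hq2
            · rw [hq2] at hab2 ⊢
              exact fun hh => hc1S1 (by rw [hh]; exact hS1mem b2 hab2 (hTne b2 hb2).1)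
            · rw [hq2] at ha2
              exact absurd ha2 huT
          · rw [hq] at hme2
            rcases Sym2.mem_iff.1 hme2 with hq2 | hq2
            · rw [oe_symm]
              rw [hq2] at hab2 ⊢
              exact fun hh => hc1S1 (by rw [hh]; exact hS1mem a2 hab2.symm (hTne a2 ha2).1)
            · rw [hq2] at hb2
              exact absurd hb2 huT
    · -- e = P2
      rcases hclass f hf with rfl | rfl | rfl | rfl | rfl | rfl | ⟨a2, b2, ha2, hb2, rfl, hab2⟩
      · rw [hP2, hP1]
        exact Ne.symm hc12
      · exact absurd rfl hef
      · rw [hP2, hP3]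
        exact hc23
      · rcases sym2_share hme hmf with hq | hq | hq | hq
        exacts [absurd hq nuv, absurd hq nuy, absurd hq nxv, absurd hq nxy]
      · rcases sym2_share hme hmf with hq | hq | hq | hq
        exacts [absurd hq nuy, absurd hq nuw, absurd hq nxy, absurd hq nxw]
      · rcases sym2_share hme hmf with hq | hq | hq | hq
        exacts [absurd hq nuw, absurd hq nuy', absurd hq nxw, absurd hq nxy']
      · -- P2 vs OLD
        by_cases hxy : s(a2, b2) = s(x, y)
        · rw [hxy, hP2, hXY]
          exact hc2t
        · rw [hP2, hOLD a2 b2 ha2 hb2 hxy]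
          have hme2 := hme
          rcases Sym2.mem_iff.1 hmf with hq | hq
          · rw [hq] at hme2
            rcases Sym2.mem_iff.1 hme2 with hq2 | hq2
            · rw [hq2] at ha2
              exact absurd ha2 huT
            · have hny : b2 ≠ y := fun hh => hxy (by rw [hq2, hh])
              rw [hq2] at hab2 ⊢
              exact fun hh => hc2A (by rw [hh]; exact keyA b2 hb2 hab2 hny)
          · rw [hq] at hme2
            rcases Sym2.mem_iff.1 hme2 with hq2 | hq2
            · rw [hq2] at hb2
              exact absurd hb2 huT
            · have hny : a2 ≠ y := fun hh => hxy (by rw [hq2, hh]; exact Sym2.eq_swap)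
              rw [oe_symm]
              rw [hq2] at hab2 ⊢
              exact fun hh => hc2A (by rw [hh]; exact keyA a2 ha2 hab2.symm hny)
    · -- e = P3
      rcases hclass f hf with rfl | rfl | rfl | rfl | rfl | rfl | ⟨a2, b2, ha2, hb2, rfl, hab2⟩
      · rcases sym2_share hme hmf with hq | hq | hq | hq
        exacts [absurd hq (Ne.symm nx'x), absurd hq (Ne.symm nux), absurd hq (Ne.symm nx'v), absurd hq (Ne.symm nuv)]
      · rw [hP3, hP2]
        exact Ne.symm hc23
      · exact absurd rfl hef
      · rw [hP3, hP4]
        exact hc34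
      · rcases sym2_share hme hmf with hq | hq | hq | hq
        exacts [absurd hq nxy, absurd hq nxw, absurd hq nvy, absurd hq nvw]
      · rcases sym2_share hme hmf with hq | hq | hq | hq
        exacts [absurd hq nxw, absurd hq nxy', absurd hq nvw, absurd hq nvy']
      · -- P3 vs OLD
        by_cases hxy : s(a2, b2) = s(x, y)
        · rw [hxy, hP3, hXY]
          exact hc3t
        · rw [hP3, hOLD a2 b2 ha2 hb2 hxy]
          have hme2 := hme
          rcases Sym2.mem_iff.1 hmf with hq | hq
          · rw [hq] at hme2
            rcases Sym2.mem_iff.1 hme2 with hq2 | hq2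
            · have hny : b2 ≠ y := fun hh => hxy (by rw [hq2, hh])
              rw [hq2] at hab2 ⊢
              exact fun hh => hc3A (by rw [hh]; exact keyA b2 hb2 hab2 hny)
            · rw [hq2] at ha2
              exact absurd ha2 hvT
          · rw [hq] at hme2
            rcases Sym2.mem_iff.1 hme2 with hq2 | hq2
            · have hny : a2 ≠ y := fun hh => hxy (by rw [hq2, hh]; exact Sym2.eq_swap)
              rw [oe_symm]
              rw [hq2] at hab2 ⊢
              exact fun hh => hc3A (by rw [hh]; exact keyA a2 ha2 hab2.symm hny)
            · rw [hq2] at hb2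
              exact absurd hb2 hvT
    · -- e = P4
      rcases hclass f hf with rfl | rfl | rfl | rfl | rfl | rfl | ⟨a2, b2, ha2, hb2, rfl, hab2⟩
      · rcases sym2_share hme hmf with hq | hq | hq | hq
        exacts [absurd hq (Ne.symm nx'v), absurd hq (Ne.symm nuv), absurd hq (Ne.symm nx'y), absurd hq (Ne.symm nuy)]
      · rcases sym2_share hme hmf with hq | hq | hq | hq
        exacts [absurd hq (Ne.symm nuv), absurd hq (Ne.symm nxv), absurd hq (Ne.symm nuy), absurd hq (Ne.symm nxy)]
      · rw [hP4, hP3]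
        exact Ne.symm hc34
      · exact absurd rfl hef
      · rw [hP4, hP5]
        exact hc45
      · rcases sym2_share hme hmf with hq | hq | hq | hq
        exacts [absurd hq nvw, absurd hq nvy', absurd hq nyw, absurd hq nyy']
      · -- P4 vs OLD
        by_cases hxy : s(a2, b2) = s(x, y)
        · rw [hxy, hP4, hXY]
          exact hc4t
        · rw [hP4, hOLD a2 b2 ha2 hb2 hxy]
          have hme2 := hme
          rcases Sym2.mem_iff.1 hmf with hq | hq
          · rw [hq] at hme2
            rcases Sym2.mem_iff.1 hme2 with hq2 | hq2
            · rw [hq2] at ha2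
              exact absurd ha2 hvT
            · have hnx : b2 ≠ x := fun hh => hxy (by rw [hq2, hh]; exact Sym2.eq_swap)
              rw [hq2] at hab2 ⊢
              exact fun hh => hc4B (by rw [hh]; exact keyB b2 hb2 hab2 hnx)
          · rw [hq] at hme2
            rcases Sym2.mem_iff.1 hme2 with hq2 | hq2
            · rw [hq2] at hb2
              exact absurd hb2 hvT
            · have hnx : a2 ≠ x := fun hh => hxy (by rw [hq2, hh])
              rw [oe_symm]
              rw [hq2] at hab2 ⊢
              exact fun hh => hc4B (by rw [hh]; exact keyB a2 ha2 hab2.symm hnx)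
    · -- e = P5
      rcases hclass f hf with rfl | rfl | rfl | rfl | rfl | rfl | ⟨a2, b2, ha2, hb2, rfl, hab2⟩
      · rcases sym2_share hme hmf with hq | hq | hq | hq
        exacts [absurd hq (Ne.symm nx'y), absurd hq (Ne.symm nuy), absurd hq (Ne.symm nx'w), absurd hq (Ne.symm nuw)]
      · rcases sym2_share hme hmf with hq | hq | hq | hq
        exacts [absurd hq (Ne.symm nuy), absurd hq (Ne.symm nxy), absurd hq (Ne.symm nuw), absurd hq (Ne.symm nxw)]
      · rcases sym2_share hme hmf with hq | hq | hq | hq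
        exacts [absurd hq (Ne.symm nxy), absurd hq (Ne.symm nvy), absurd hq (Ne.symm nxw), absurd hq (Ne.symm nvw)]
      · rw [hP5, hP4]
        exact Ne.symm hc45
      · exact absurd rfl hef
      · rw [hP5, hP6]
        exact hc56
      · -- P5 vs OLD
        by_cases hxy : s(a2, b2) = s(x, y)
        · rw [hxy, hP5, hXY]
          exact hc5t
        · rw [hP5, hOLD a2 b2 ha2 hb2 hxy]
          have hme2 := hme
          rcases Sym2.mem_iff.1 hmf with hq | hq
          · rw [hq] at hme2
            rcases Sym2.mem_iff.1 hme2 with hq2 | hq2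
            · have hnx : b2 ≠ x := fun hh => hxy (by rw [hq2, hh]; exact Sym2.eq_swap)
              rw [hq2] at hab2 ⊢
              exact fun hh => hc5B (by rw [hh]; exact keyB b2 hb2 hab2 hnx)
            · rw [hq2] at ha2
              exact absurd ha2 hwT
          · rw [hq] at hme2
            rcases Sym2.mem_iff.1 hme2 with hq2 | hq2
            · have hnx : a2 ≠ x := fun hh => hxy (by rw [hq2, hh])
              rw [oe_symm]
              rw [hq2] at hab2 ⊢
              exact fun hh => hc5B (by rw [hh]; exact keyB a2 ha2 hab2.symm hnx)
            · rw [hq2] at hb2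
              exact absurd hb2 hwT
    · -- e = P6
      rcases hclass f hf with rfl | rfl | rfl | rfl | rfl | rfl | ⟨a2, b2, ha2, hb2, rfl, hab2⟩
      · rcases sym2_share hme hmf with hq | hq | hq | hq
        exacts [absurd hq (Ne.symm nx'w), absurd hq (Ne.symm nuw), absurd hq (Ne.symm nx'y'), absurd hq (Ne.symm nuy')]
      · rcases sym2_share hme hmf with hq | hq | hq | hq
        exacts [absurd hq (Ne.symm nuw), absurd hq (Ne.symm nxw), absurd hq (Ne.symm nuy'), absurd hq (Ne.symm nxy')]
      · rcases sym2_share hme hmf with hq | hq | hq | hq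
        exacts [absurd hq (Ne.symm nxw), absurd hq (Ne.symm nvw), absurd hq (Ne.symm nxy'), absurd hq (Ne.symm nvy')]
      · rcases sym2_share hme hmf with hq | hq | hq | hq
        exacts [absurd hq (Ne.symm nvw), absurd hq (Ne.symm nyw), absurd hq (Ne.symm nvy'), absurd hq (Ne.symm nyy')]
      · rw [hP6, hP5]
        exact Ne.symm hc56
      · exact absurd rfl hef
      · -- P6 vs OLD
        by_cases hxy : s(a2, b2) = s(x, y)
        · rw [hxy] at hmf
          rcases sym2_share hme hmf with hq | hq | hq | hq
          exacts [absurd hq (Ne.symm nxw), absurd hq (Ne.symm nyw), absurd hq (Ne.symm nxy'), absurd hq (Ne.symm nyy')]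
        · rw [hP6, hOLD a2 b2 ha2 hb2 hxy]
          have hme2 := hme
          rcases Sym2.mem_iff.1 hmf with hq | hq
          · rw [hq] at hme2
            rcases Sym2.mem_iff.1 hme2 with hq2 | hq2
            · rw [hq2] at ha2
              exact absurd ha2 hwT
            · rw [hq2] at hab2 ⊢
              exact fun hh => hc6S6 (by rw [hh]; exact hS6mem b2 hab2 (hTne b2 hb2).2.2)
          · rw [hq] at hme2
            rcases Sym2.mem_iff.1 hme2 with hq2 | hq2
            · rw [hq2] at hb2
              exact absurd hb2 hwT
            · rw [oe_symm]
              rw [hq2] at hab2 ⊢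
              exact fun hh => hc6S6 (by rw [hh]; exact hS6mem a2 hab2.symm (hTne a2 ha2).2.2)
    · -- e = OLD
      rcases hclass f hf with rfl | rfl | rfl | rfl | rfl | rfl | ⟨a2, b2, ha2, hb2, rfl, hab2⟩
      · -- OLD vs P1
        by_cases hxy : s(a, b) = s(x, y)
        · rw [hxy] at hme
          rcases sym2_share hme hmf with hq | hq | hq | hq
          exacts [absurd hq (Ne.symm nx'x), absurd hq (Ne.symm nux), absurd hq (Ne.symm nx'y), absurd hq (Ne.symm nuy)]
        · rw [hOLD a b ha hb hxy, hP1]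
          have hme2 := hmf
          rcases Sym2.mem_iff.1 hme with hq | hq
          · rw [hq] at hme2
            rcases Sym2.mem_iff.1 hme2 with hq2 | hq2
            · rw [hq2] at hab ⊢
              exact fun hh => hc1S1 (by rw [← hh]; exact hS1mem b hab (hTne b hb).1)
            · rw [hq2] at ha
              exact absurd ha huT
          · rw [hq] at hme2
            rcases Sym2.mem_iff.1 hme2 with hq2 | hq2
            · rw [oe_symm]
              rw [hq2] at hab ⊢
              exact fun hh => hc1S1 (by rw [← hh]; exact hS1mem a hab.symm (hTne a ha).1)
            · rw [hq2] at hb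
              exact absurd hb huT
      · -- OLD vs P2
        by_cases hxy : s(a, b) = s(x, y)
        · rw [hxy, hXY, hP2]
          exact Ne.symm hc2t
        · rw [hOLD a b ha hb hxy, hP2]
          have hme2 := hmf
          rcases Sym2.mem_iff.1 hme with hq | hq
          · rw [hq] at hme2
            rcases Sym2.mem_iff.1 hme2 with hq2 | hq2
            · rw [hq2] at ha
              exact absurd ha huT
            · have hny : b ≠ y := fun hh => hxy (by rw [hq2, hh])
              rw [hq2] at hab ⊢
              exact fun hh => hc2A (by rw [← hh]; exact keyA b hb hab hny)
          · rw [hq] at hme2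
            rcases Sym2.mem_iff.1 hme2 with hq2 | hq2
            · rw [hq2] at hb
              exact absurd hb huT
            · have hny : a ≠ y := fun hh => hxy (by rw [hq2, hh]; exact Sym2.eq_swap)
              rw [oe_symm]
              rw [hq2] at hab ⊢
              exact fun hh => hc2A (by rw [← hh]; exact keyA a ha hab.symm hny)
      · -- OLD vs P3
        by_cases hxy : s(a, b) = s(x, y)
        · rw [hxy, hXY, hP3]
          exact Ne.symm hc3t
        · rw [hOLD a b ha hb hxy, hP3]
          have hme2 := hmf
          rcases Sym2.mem_iff.1 hme with hq | hq
          · rw [hq] at hme2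
            rcases Sym2.mem_iff.1 hme2 with hq2 | hq2
            · have hny : b ≠ y := fun hh => hxy (by rw [hq2, hh])
              rw [hq2] at hab ⊢
              exact fun hh => hc3A (by rw [← hh]; exact keyA b hb hab hny)
            · rw [hq2] at ha
              exact absurd ha hvT
          · rw [hq] at hme2
            rcases Sym2.mem_iff.1 hme2 with hq2 | hq2
            · have hny : a ≠ y := fun hh => hxy (by rw [hq2, hh]; exact Sym2.eq_swap)
              rw [oe_symm]
              rw [hq2] at hab ⊢
              exact fun hh => hc3A (by rw [← hh]; exact keyA a ha hab.symm hny)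
            · rw [hq2] at hb
              exact absurd hb hvT
      · -- OLD vs P4
        by_cases hxy : s(a, b) = s(x, y)
        · rw [hxy, hXY, hP4]
          exact Ne.symm hc4t
        · rw [hOLD a b ha hb hxy, hP4]
          have hme2 := hmf
          rcases Sym2.mem_iff.1 hme with hq | hq
          · rw [hq] at hme2
            rcases Sym2.mem_iff.1 hme2 with hq2 | hq2
            · rw [hq2] at ha
              exact absurd ha hvT
            · have hnx : b ≠ x := fun hh => hxy (by rw [hq2, hh]; exact Sym2.eq_swap)
              rw [hq2] at hab ⊢
              exact fun hh => hc4B (by rw [← hh]; exact keyB b hb hab hnx)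
          · rw [hq] at hme2
            rcases Sym2.mem_iff.1 hme2 with hq2 | hq2
            · rw [hq2] at hb
              exact absurd hb hvT
            · have hnx : a ≠ x := fun hh => hxy (by rw [hq2, hh])
              rw [oe_symm]
              rw [hq2] at hab ⊢
              exact fun hh => hc4B (by rw [← hh]; exact keyB a ha hab.symm hnx)
      · -- OLD vs P5
        by_cases hxy : s(a, b) = s(x, y)
        · rw [hxy, hXY, hP5]
          exact Ne.symm hc5t
        · rw [hOLD a b ha hb hxy, hP5]
          have hme2 := hmf
          rcases Sym2.mem_iff.1 hme with hq | hq
          · rw [hq] at hme2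
            rcases Sym2.mem_iff.1 hme2 with hq2 | hq2
            · have hnx : b ≠ x := fun hh => hxy (by rw [hq2, hh]; exact Sym2.eq_swap)
              rw [hq2] at hab ⊢
              exact fun hh => hc5B (by rw [← hh]; exact keyB b hb hab hnx)
            · rw [hq2] at ha
              exact absurd ha hwT
          · rw [hq] at hme2
            rcases Sym2.mem_iff.1 hme2 with hq2 | hq2
            · have hnx : a ≠ x := fun hh => hxy (by rw [hq2, hh])
              rw [oe_symm]
              rw [hq2] at hab ⊢
              exact fun hh => hc5B (by rw [← hh]; exact keyB a ha hab.symm hnx)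
            · rw [hq2] at hb
              exact absurd hb hwT
      · -- OLD vs P6
        by_cases hxy : s(a, b) = s(x, y)
        · rw [hxy] at hme
          rcases sym2_share hme hmf with hq | hq | hq | hq
          exacts [absurd hq nxw, absurd hq nxy', absurd hq nyw, absurd hq nyy']
        · rw [hOLD a b ha hb hxy, hP6]
          have hme2 := hmf
          rcases Sym2.mem_iff.1 hme with hq | hq
          · rw [hq] at hme2
            rcases Sym2.mem_iff.1 hme2 with hq2 | hq2
            · rw [hq2] at ha
              exact absurd ha hwT
            · rw [hq2] at hab ⊢
              exact fun hh => hc6S6 (by rw [← hh]; exact hS6mem b hab (hTne b hb).2.2)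
          · rw [hq] at hme2
            rcases Sym2.mem_iff.1 hme2 with hq2 | hq2
            · rw [hq2] at hb
              exact absurd hb hwT
            · rw [oe_symm]
              rw [hq2] at hab ⊢
              exact fun hh => hc6S6 (by rw [← hh]; exact hS6mem a hab.symm (hTne a ha).2.2)
      · -- OLD vs OLD
        by_cases hxy : s(a, b) = s(x, y)
        · by_cases hxy2 : s(a2, b2) = s(x, y)
          · exact absurd (hxy.trans hxy2.symm) hef
          · rw [hxy, hXY, hOLD a2 b2 ha2 hb2 hxy2]
            have hme2 := hme
            rw [hxy] at hme2
            have hme3 := hme2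
            rcases Sym2.mem_iff.1 hmf with hq | hq
            · rw [hq] at hme3
              rcases Sym2.mem_iff.1 hme3 with hq2 | hq2
              · have hny : b2 ≠ y := fun hh => hxy2 (by rw [hq2, hh])
                rw [hq2] at hab2 ⊢
                exact fun hh => htA' (by rw [hh]; exact keyA b2 hb2 hab2 hny)
              · have hnx : b2 ≠ x := fun hh => hxy2 (by rw [hq2, hh]; exact Sym2.eq_swap)
                rw [hq2] at hab2 ⊢
                exact fun hh => htB' (by rw [hh]; exact keyB b2 hb2 hab2 hnx)
            · rw [hq] at hme3
              rcases Sym2.mem_iff.1 hme3 with hq2 | hq2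
              · have hny : a2 ≠ y := fun hh => hxy2 (by rw [hq2, hh]; exact Sym2.eq_swap)
                rw [oe_symm]
                rw [hq2] at hab2 ⊢
                exact fun hh => htA' (by rw [hh]; exact keyA a2 ha2 hab2.symm hny)
              · have hnx : a2 ≠ x := fun hh => hxy2 (by rw [hq2, hh])
                rw [oe_symm]
                rw [hq2] at hab2 ⊢
                exact fun hh => htB' (by rw [hh]; exact keyB a2 ha2 hab2.symm hnx)
        · by_cases hxy2 : s(a2, b2) = s(x, y)
          · rw [hxy2, hXY, hOLD a b ha hb hxy]
            have hme3 := hmf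
            rw [hxy2] at hme3
            rcases Sym2.mem_iff.1 hme with hq | hq
            · rw [hq] at hme3
              rcases Sym2.mem_iff.1 hme3 with hq2 | hq2
              · have hny : b ≠ y := fun hh => hxy (by rw [hq2, hh])
                rw [hq2] at hab ⊢
                exact fun hh => htA' (by rw [← hh]; exact keyA b hb hab hny)
              · have hnx : b ≠ x := fun hh => hxy (by rw [hq2, hh]; exact Sym2.eq_swap)
                rw [hq2] at hab ⊢
                exact fun hh => htB' (by rw [← hh]; exact keyB b hb hab hnx)
            · rw [hq] at hme3
              rcases Sym2.mem_iff.1 hme3 with hq2 | hq2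
              · have hny : a ≠ y := fun hh => hxy (by rw [hq2, hh]; exact Sym2.eq_swap)
                rw [oe_symm]
                rw [hq2] at hab ⊢
                exact fun hh => htA' (by rw [← hh]; exact keyA a ha hab.symm hny)
              · have hnx : a ≠ x := fun hh => hxy (by rw [hq2, hh])
                rw [oe_symm]
                rw [hq2] at hab ⊢
                exact fun hh => htB' (by rw [← hh]; exact keyB a ha hab.symm hnx)
          · rw [hOLD a b ha hb hxy, hOLD a2 b2 ha2 hb2 hxy2]
            exact oe_ne a b a2 b2 ha hb ha2 hb2 hab hab2 hef (sym2_share hme hmf)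
  · -- vertex-edge
    intro z e he hz
    rcases hclass e he with rfl | rfl | rfl | rfl | rfl | rfl | ⟨a, b, ha, hb, rfl, hab⟩
    · rw [hP1]
      rcases Sym2.mem_iff.1 hz with hq | hq
      · rw [hq, hcvNold x' hx'T]
        exact fun hh => hc1S1 (hh ▸ hS1cv)
      · rw [hq, hcvNu]; exact hcu1
    · rw [hP2]
      rcases Sym2.mem_iff.1 hz with hq | hq
      · rw [hq, hcvNu]; exact hcu2
      · rw [hq, hcvNold x hxT]
        exact fun hh => hc2A (hh ▸ hA0cvx)
    · rw [hP3]
      rcases Sym2.mem_iff.1 hz with hq | hq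
      · rw [hq, hcvNold x hxT]
        exact fun hh => hc3A (hh ▸ hA0cvx)
      · rw [hq, hcvNv]; exact hcV3
    · rw [hP4]
      rcases Sym2.mem_iff.1 hz with hq | hq
      · rw [hq, hcvNv]; exact hcV4
      · rw [hq, hcvNold y hyT]
        exact fun hh => hc4B (hh ▸ hB0cvy)
    · rw [hP5]
      rcases Sym2.mem_iff.1 hz with hq | hq
      · rw [hq, hcvNold y hyT]
        exact fun hh => hc5B (hh ▸ hB0cvy)
      · rw [hq, hcvNw]; exact hcW5
    · rw [hP6]
      rcases Sym2.mem_iff.1 hz with hq | hq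
      · rw [hq, hcvNw]; exact hcW6
      · rw [hq, hcvNold y' hy'T]
        exact fun hh => hc6S6 (hh ▸ hS6cv)
    · by_cases hxy : s(a, b) = s(x, y)
      · rw [hxy, hXY]
        rw [hxy] at hz
        rcases Sym2.mem_iff.1 hz with hq | hq
        · rw [hq, hcvNold x hxT]
          exact fun hh => htA' (hh ▸ hA0cvx)
        · rw [hq, hcvNold y hyT]
          exact fun hh => htB' (hh ▸ hB0cvy)
      · rw [hOLD a b ha hb hxy]
        rcases Sym2.mem_iff.1 hz with hq | hq
        · rw [hq, hcvNold a ha]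
          exact cv_ne_oe a a b ha ha hb hab (Or.inl rfl)
        · rw [hq, hcvNold b hb]
          exact cv_ne_oe b a b hb ha hb hab (Or.inr rfl)
end

section
/- Let c be a proper total coloring of a graph G using color set U with |U| = M+1, M ≥ 5, and suppose uv is an uncolored edge with deg(u)=deg(v)=3, where u,x,v,y is a 4-cycle (edges ux, uy, vx, vy colored). If all M+1 colors appear among {c(u), c(v), c(ux), c(uy), c(vx), c(vy)} then M = 5; moreover, in that case one can recolor one of u or v and then color uv to obtain a proper total coloring of G. -/
open SimpleGraph

lemma nbrs {V : Type*} [Fintype V] [DecidableEq V] (G : SimpleGraph V) [DecidableRel G.Adj]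
    (u x y v : V) (hux : G.Adj u x) (huy : G.Adj u y) (huv : G.Adj u v)
    (hxy : x ≠ y) (hxv : x ≠ v) (hyv : y ≠ v) (hdu : G.degree u = 3) :
    ∀ w, G.Adj u w → w = x ∨ w = y ∨ w = v := by
  have hsub : ({x, y, v} : Finset V) ⊆ G.neighborFinset u := by
    intro w hw
    simp only [Finset.mem_insert, Finset.mem_singleton] at hw
    rcases hw with rfl | rfl | rfl <;> simp [mem_neighborFinset, *]
  have hcard : (G.neighborFinset u).card ≤ ({x, y, v} : Finset V).card := by
    rw [Finset.card_insert_of_notMem (by simp [hxy, hxv]),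
      Finset.card_insert_of_notMem (by simp [hyv]), Finset.card_singleton]
    rw [show (1+1+1 : ℕ) = 3 by norm_num, ← hdu, card_neighborFinset_eq_degree]
  have heq := Finset.eq_of_subset_of_card_le hsub hcard
  intro w hw
  have : w ∈ G.neighborFinset u := by simpa [mem_neighborFinset] using hw
  rw [← heq] at this
  simpa using this

lemma edge_cases {V : Type*} (G : SimpleGraph V) (u x y v : V)
    (hn : ∀ w, G.Adj u w → w = x ∨ w = y ∨ w = v) :
    ∀ e ∈ G.edgeSet, u ∈ e → e = s(u, x) ∨ e = s(u, y) ∨ e = s(u, v) := by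
  intro e he hu
  induction e using Sym2.ind with
  | _ a b =>
    rw [Sym2.mem_iff] at hu
    rw [mem_edgeSet] at he
    rcases hu with rfl | rfl
    · rcases hn b he with rfl | rfl | rfl
      exacts [Or.inl rfl, Or.inr (Or.inl rfl), Or.inr (Or.inr rfl)]
    · rcases hn a he.symm with rfl | rfl | rfl
      exacts [Or.inl Sym2.eq_swap, Or.inr (Or.inl Sym2.eq_swap), Or.inr (Or.inr Sym2.eq_swap)]

lemma build {V : Type*} [Fintype V] [DecidableEq V] (G : SimpleGraph V) [DecidableRel G.Adj]
    (u v x y : V) (k : ℕ) (hxy : x ≠ y)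
    (hux : G.Adj u x) (huy : G.Adj u y) (hvx : G.Adj v x) (hvy : G.Adj v y)
    (huv : G.Adj u v) (hdu : G.degree u = 3) (hdv : G.degree v = 3)
    (cv : V → Fin k) (ce : Sym2 V → Fin k)
    (hc : IsTotalColoring (G.deleteEdges {s(u, v)}) k cv ce)
    (α : Fin k)
    (hαu : α ≠ cv u) (hαv : α ≠ cv v) (hαx : α ≠ cv x) (hαy : α ≠ cv y)
    (hαp : α ≠ ce s(u, x)) (hαq : α ≠ ce s(u, y))
    (har : cv u ≠ ce s(v, x)) (hat : cv u ≠ ce s(v, y)) (hab : cv u ≠ cv v) :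
    IsTotalColoring G k (Function.update cv u α) (Function.update ce s(u, v) (cv u)) := by
  obtain ⟨h1, h2, h3⟩ := hc
  have huv' : u ≠ v := huv.ne
  have hnu : ∀ w, G.Adj u w → w = x ∨ w = y ∨ w = v :=
    nbrs G u x y v hux huy huv hxy hvx.ne' hvy.ne' hdu
  have hnv : ∀ w, G.Adj v w → w = x ∨ w = y ∨ w = u :=
    nbrs G v x y u hvx hvy huv.symm hxy hux.ne' huy.ne' hdv
  have hmd : ∀ e, e ∈ G.edgeSet → e ≠ s(u, v) → e ∈ (G.deleteEdges {s(u, v)}).edgeSet := by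
    intro e he hne
    rw [edgeSet_deleteEdges]
    exact ⟨he, by simpa using hne⟩
  have hadjd : ∀ a b : V, G.Adj a b → a ≠ u → b ≠ u → (G.deleteEdges {s(u, v)}).Adj a b := by
    intro a b h ha hb
    rw [deleteEdges_adj]
    refine ⟨h, ?_⟩
    simp only [Set.mem_singleton_iff, Sym2.eq_iff]
    rintro (⟨rfl, rfl⟩ | ⟨rfl, rfl⟩) <;> simp_all
  -- key: cv u differs from any edge of G incident to u or v, other than s(u,v)
  have hkey : ∀ f ∈ G.edgeSet, f ≠ s(u, v) → (u ∈ f ∨ v ∈ f) → cv u ≠ ce f := by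
    intro f hf hne hm
    rcases hm with hm | hm
    · exact h3 u f (hmd f hf hne) hm
    · rcases edge_cases G v x y u hnv f hf hm with rfl | rfl | rfl
      · exact har
      · exact hat
      · exact absurd Sym2.eq_swap hne
  refine ⟨?_, ?_, ?_⟩
  · intro a b hab2
    rcases eq_or_ne u a with rfl | ha
    · have hbu : b ≠ u := hab2.ne'
      rw [Function.update_self, Function.update_of_ne hbu]
      rcases hnu b hab2 with rfl | rfl | rfl
      exacts [hαx, hαy, hαv]
    · rw [Function.update_of_ne (Ne.symm ha)]
      rcases eq_or_ne u b with rfl | hb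
      · rw [Function.update_self]
        rcases hnu a hab2.symm with rfl | rfl | rfl
        exacts [hαx.symm, hαy.symm, hαv.symm]
      · rw [Function.update_of_ne (Ne.symm hb)]
        exact h1 (hadjd a b hab2 (Ne.symm ha) (Ne.symm hb))
  · intro e f he hf hef ⟨w, hwe, hwf⟩
    rcases eq_or_ne e s(u, v) with rfl | heuv
    · have hfuv : f ≠ s(u, v) := fun h => hef h.symm
      rw [Function.update_self, Function.update_of_ne hfuv]
      have hw : u ∈ f ∨ v ∈ f := by
        rcases Sym2.mem_iff.mp hwe with rfl | rfl
        exacts [Or.inl hwf, Or.inr hwf]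
      exact hkey f hf hfuv hw
    · rw [Function.update_of_ne heuv]
      rcases eq_or_ne f s(u, v) with rfl | hfuv
      · rw [Function.update_self]
        have hw : u ∈ e ∨ v ∈ e := by
          rcases Sym2.mem_iff.mp hwf with rfl | rfl
          exacts [Or.inl hwe, Or.inr hwe]
        exact (hkey e he heuv hw).symm
      · rw [Function.update_of_ne hfuv]
        exact h2 e f (hmd e he heuv) (hmd f hf hfuv) hef ⟨w, hwe, hwf⟩
  · intro w e he hw
    rcases eq_or_ne e s(u, v) with rfl | heuv
    · rw [Function.update_self]
      rcases Sym2.mem_iff.mp hw with rfl | rfl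
      · rw [Function.update_self]; exact hαu
      · rw [Function.update_of_ne huv'.symm]; exact hab.symm
    · rw [Function.update_of_ne heuv]
      rcases eq_or_ne u w with rfl | hwu
      · rw [Function.update_self]
        rcases edge_cases G u x y v hnu e he hw with rfl | rfl | rfl
        exacts [hαp, hαq, absurd rfl heuv]
      · rw [Function.update_of_ne (Ne.symm hwu)]
        exact h3 w e (hmd e he heuv) hw
theorem stmt_16 {V : Type*} [Fintype V] [DecidableEq V] (G : SimpleGraph V)
    [DecidableRel G.Adj] (u v x y : V) (M : ℕ) (hM : 5 ≤ M) (hxy : x ≠ y)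
    (hux : G.Adj u x) (huy : G.Adj u y) (hvx : G.Adj v x) (hvy : G.Adj v y)
    (huv : G.Adj u v) (hdu : G.degree u = 3) (hdv : G.degree v = 3)
    (cv : V → Fin (M + 1)) (ce : Sym2 V → Fin (M + 1))
    (hc : IsTotalColoring (G.deleteEdges {s(u, v)}) (M + 1) cv ce)
    (hall : ∀ a : Fin (M + 1),
      a ∈ ({cv u, cv v, ce s(u, x), ce s(u, y), ce s(v, x), ce s(v, y)} :
        Set (Fin (M + 1)))) :
    M = 5 ∧ ∃ (cv' : V → Fin (M + 1)) (ce' : Sym2 V → Fin (M + 1)),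
      IsTotalColoring G (M + 1) cv' ce' ∧
      (∀ z, z ≠ u → z ≠ v → cv' z = cv z) ∧
      (cv' u = cv u ∨ cv' v = cv v) ∧
      ∀ e ∈ (G.deleteEdges {s(u, v)}).edgeSet, ce' e = ce e := by
  have huvne : u ≠ v := huv.ne
  have hxv : x ≠ v := hvx.ne'
  have hyv : y ≠ v := hvy.ne'
  have hxu : x ≠ u := hux.ne'
  have hyu : y ≠ u := huy.ne'
  have hsub : (Finset.univ : Finset (Fin (M + 1))) ⊆
      ([cv u, cv v, ce s(u, x), ce s(u, y), ce s(v, x), ce s(v, y)]).toFinset := by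
    intro z _
    simpa using hall z
  have hM5 : M = 5 := by
    have h6 : M + 1 ≤ 6 := by
      have := (Finset.card_le_card hsub).trans (List.toFinset_card_le _)
      simpa using this
    omega
  subst hM5
  refine ⟨rfl, ?_⟩
  have hnd : ([cv u, cv v, ce s(u, x), ce s(u, y), ce s(v, x), ce s(v, y)] :
      List (Fin 6)).Nodup := by
    have hcard : ([cv u, cv v, ce s(u, x), ce s(u, y), ce s(v, x), ce s(v, y)] :
        List (Fin 6)).toFinset.card = 6 := by
      refine le_antisymm (le_trans (List.toFinset_card_le _) (by norm_num)) ?_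
      simpa using Finset.card_le_card hsub
    rw [← Multiset.coe_nodup, ← Multiset.toFinset_card_eq_card_iff_nodup]
    simpa using hcard
  simp only [List.nodup_cons, List.mem_cons, List.mem_singleton, List.not_mem_nil,
    or_false, not_or, List.nodup_nil, and_true, List.nodup_singleton] at hnd
  obtain ⟨⟨hab, hap, haq, har, hat⟩, ⟨hbp, hbq, hbr, hbt⟩, ⟨hpq, hpr, hpt⟩, ⟨hqr, hqt⟩, hrt, -⟩ := hnd
  have hdadj : ∀ a b : V, G.Adj a b → s(a, b) ≠ s(u, v) →
      (G.deleteEdges {s(u, v)}).Adj a b := by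
    intro a b h hne
    rw [deleteEdges_adj]
    exact ⟨h, by simpa using hne⟩
  have hd_ux : (G.deleteEdges {s(u, v)}).Adj u x :=
    hdadj u x hux (by simp [Sym2.eq_iff, hxv, huvne])
  have hd_uy : (G.deleteEdges {s(u, v)}).Adj u y :=
    hdadj u y huy (by simp [Sym2.eq_iff, hyv, huvne])
  have hd_vx : (G.deleteEdges {s(u, v)}).Adj v x :=
    hdadj v x hvx (by simp [Sym2.eq_iff, hxu, huvne, Ne.symm huvne])
  have hd_vy : (G.deleteEdges {s(u, v)}).Adj v y :=
    hdadj v y hvy (by simp [Sym2.eq_iff, hyu, huvne, Ne.symm huvne])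
  have hx : cv x = ce s(u, y) ∨ cv x = ce s(v, y) := by
    have hmem := hall (cv x)
    simp only [Set.mem_insert_iff, Set.mem_singleton_iff] at hmem
    have n1 : cv x ≠ cv u := (hc.1 hd_ux).symm
    have n2 : cv x ≠ cv v := (hc.1 hd_vx).symm
    have n3 : cv x ≠ ce s(u, x) := hc.2.2 x s(u, x) (((G.deleteEdges {s(u, v)}).mem_edgeSet).mpr hd_ux) (Sym2.mem_mk_right u x)
    have n4 : cv x ≠ ce s(v, x) := hc.2.2 x s(v, x) (((G.deleteEdges {s(u, v)}).mem_edgeSet).mpr hd_vx) (Sym2.mem_mk_right v x)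
    tauto
  have hy : cv y = ce s(u, x) ∨ cv y = ce s(v, x) := by
    have hmem := hall (cv y)
    simp only [Set.mem_insert_iff, Set.mem_singleton_iff] at hmem
    have n1 : cv y ≠ cv u := (hc.1 hd_uy).symm
    have n2 : cv y ≠ cv v := (hc.1 hd_vy).symm
    have n3 : cv y ≠ ce s(u, y) := hc.2.2 y s(u, y) (((G.deleteEdges {s(u, v)}).mem_edgeSet).mpr hd_uy) (Sym2.mem_mk_right u y)
    have n4 : cv y ≠ ce s(v, y) := hc.2.2 y s(v, y) (((G.deleteEdges {s(u, v)}).mem_edgeSet).mpr hd_vy) (Sym2.mem_mk_right v y)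
    tauto
  have finish1 : ∀ α : Fin 6, α ≠ cv u → α ≠ cv v → α ≠ cv x → α ≠ cv y →
      α ≠ ce s(u, x) → α ≠ ce s(u, y) →
      ∃ (cv' : V → Fin 6) (ce' : Sym2 V → Fin 6),
        IsTotalColoring G 6 cv' ce' ∧ (∀ z, z ≠ u → z ≠ v → cv' z = cv z) ∧
        (cv' u = cv u ∨ cv' v = cv v) ∧
        ∀ e ∈ (G.deleteEdges {s(u, v)}).edgeSet, ce' e = ce e := by
    intro α a1 a2 a3 a4 a5 a6
    refine ⟨Function.update cv u α, Function.update ce s(u, v) (cv u),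
      build G u v x y 6 hxy hux huy hvx hvy huv hdu hdv cv ce hc α a1 a2 a3 a4 a5 a6
        har hat hab, ?_, ?_, ?_⟩
    · intro z hzu _
      rw [Function.update_of_ne hzu]
    · right
      rw [Function.update_of_ne (Ne.symm huvne)]
    · intro e he
      rw [edgeSet_deleteEdges] at he
      rw [Function.update_of_ne (by simpa using he.2)]
  have finish2 : ∀ β : Fin 6, β ≠ cv v → β ≠ cv u → β ≠ cv x → β ≠ cv y →
      β ≠ ce s(v, x) → β ≠ ce s(v, y) →
      ∃ (cv' : V → Fin 6) (ce' : Sym2 V → Fin 6),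
        IsTotalColoring G 6 cv' ce' ∧ (∀ z, z ≠ u → z ≠ v → cv' z = cv z) ∧
        (cv' u = cv u ∨ cv' v = cv v) ∧
        ∀ e ∈ (G.deleteEdges {s(u, v)}).edgeSet, ce' e = ce e := by
    intro β b1 b2 b3 b4 b5 b6
    have hc' : IsTotalColoring (G.deleteEdges {s(v, u)}) 6 cv ce := by
      rw [show s(v, u) = s(u, v) from Sym2.eq_swap]
      exact hc
    refine ⟨Function.update cv v β, Function.update ce s(v, u) (cv v),
      build G v u x y 6 hxy hvx hvy hux huy huv.symm hdv hdu cv ce hc' β b1 b2 b3 b4 b5 b6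
        hbp hbq (Ne.symm hab), ?_, ?_, ?_⟩
    · intro z _ hzv
      rw [Function.update_of_ne hzv]
    · left
      rw [Function.update_of_ne huvne]
    · intro e he
      rw [edgeSet_deleteEdges] at he
      have : e ≠ s(v, u) := by
        rw [show s(v, u) = s(u, v) from Sym2.eq_swap]
        simpa using he.2
      rw [Function.update_of_ne this]
  rcases hx with hx | hx <;> rcases hy with hy | hy
  · exact finish1 (ce s(v, x)) (Ne.symm har) (Ne.symm hbr) (by rw [hx]; exact (Ne.symm hqr))
      (by rw [hy]; exact (Ne.symm hpr)) (Ne.symm hpr) (Ne.symm hqr)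
  · exact finish1 (ce s(v, y)) (Ne.symm hat) (Ne.symm hbt) (by rw [hx]; exact (Ne.symm hqt))
      (by rw [hy]; exact (Ne.symm hrt)) (Ne.symm hpt) (Ne.symm hqt)
  · exact finish1 (ce s(v, x)) (Ne.symm har) (Ne.symm hbr) (by rw [hx]; exact hrt)
      (by rw [hy]; exact (Ne.symm hpr)) (Ne.symm hpr) (Ne.symm hqr)
  · exact finish2 (ce s(u, x)) (Ne.symm hbp) (Ne.symm hap) (by rw [hx]; exact hpt)
      (by rw [hy]; exact hpr) hpr hpt
end
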